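/- arXiv:1012.4927 — 4 statements merged into one kernel-verified Lean document; each statement's English description precedes it below -/
import Mathlib

section
/- The Dirac-type operator Q in H ⊕ H, Q(f,g) = (−iRf + Bg, Bf) with dom(Q) = dom(B) ⊕ dom(B), is injective and closed, and for every z ∈ ℂ \ {0} the operator Q − z I has an everywhere defined bounded inverse on H ⊕ H if and only if the pencil operator M(z) = B² − i z R − z² I (with domain dom(B²)) has an everywhere defined bounded inverse on H. In particular, if in addition inf σ(B²) = 0 (so that 0 ∈ σ(M(·))), then σ(Q) ∪ {0} = σ(M(·)). -/
open scoped InnerProductSpace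

/-- `T − z I` possesses an everywhere defined bounded (two-sided) inverse. -/
def HasBoundedInverseShifted {V : Type*} [NormedAddCommGroup V] [NormedSpace ℂ V]
    (T : V →ₗ.[ℂ] V) (z : ℂ) : Prop :=
  ∃ S : V →L[ℂ] V, (∀ w : V, (S w, w + z • S w) ∈ T.graph) ∧
    ∀ x y : V, (x, y) ∈ T.graph → S (y - z • x) = x

set_option linter.unusedSectionVars false
set_option linter.unusedVariables false
set_option maxHeartbeats 1000000
set_option synthInstance.maxHeartbeats 400000

section DPAux

variable {H : Type*} [NormedAddCommGroup H] [InnerProductSpace ℂ H] [CompleteSpace H]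

lemma DP_quad {x u c1 c2 : ℝ} (hx : 0 ≤ x) (hu : 0 ≤ u) (hc1 : 0 ≤ c1) (hc2 : 0 ≤ c2)
    (h : x^2 ≤ c1*u^2 + c2*u*x) : x ≤ (c2 + Real.sqrt c1) * u := by
  have hs0 := Real.sqrt_nonneg c1
  by_cases hcase : x ≤ c2*u
  · nlinarith [mul_nonneg hs0 hu]
  · push_neg at hcase
    have h1 : 0 < x - c2*u := by linarith
    have h2 : (x - c2*u)^2 ≤ c1*u^2 := by nlinarith [mul_le_mul_of_nonneg_right (by nlinarith [mul_nonneg hc2 hu] : x - c2*u ≤ x) h1.le]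
    have h3 := Real.sqrt_le_sqrt h2
    rw [Real.sqrt_sq h1.le] at h3
    have h4 : Real.sqrt (c1*u^2) = Real.sqrt c1 * u := by
      rw [Real.sqrt_mul hc1, Real.sqrt_sq hu]
    rw [h4] at h3
    linarith

lemma DP_le1 {x y : ℝ} (hx : 0 ≤ x) (hy : 0 ≤ y) (h : x^2 ≤ y * x) : x ≤ y := by
  rcases eq_or_lt_of_le hx with h0 | h0
  · linarith
  · nlinarith

lemma DP_le2 {x y : ℝ} (hx : 0 ≤ x) (hy : 0 ≤ y) (h : x^2 ≤ y^2) : x ≤ y := by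
  nlinarith [sq_nonneg (x - y), sq_nonneg (x + y)]

lemma DP_symm (B : H →ₗ.[ℂ] H) (hBdense : Dense (B.domain : Set H)) (hBsa : B.adjoint = B)
    (x y : B.domain) : ⟪(B x : H), (y : H)⟫_ℂ = ⟪(x : H), (B y : H)⟫_ℂ := by
  have h := LinearPMap.adjoint_isFormalAdjoint (T := B) hBdense
  rw [hBsa] at h
  exact h x y

lemma DP_graph_unique (T : H →ₗ.[ℂ] H) {x y1 y2 : H}
    (h1 : (x, y1) ∈ T.graph) (h2 : (x, y2) ∈ T.graph) : y1 = y2 := by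
  rw [LinearPMap.mem_graph_iff] at h1 h2
  obtain ⟨p, hp, hp2⟩ := h1
  obtain ⟨q, hq, hq2⟩ := h2
  have : p = q := Subtype.ext (by simp only at hp hq; rw [hp, hq])
  simp only at hp2 hq2
  rw [← hp2, ← hq2, this]

lemma DP_graph_iff (B : H →ₗ.[ℂ] H) (hBdense : Dense (B.domain : Set H)) (hBsa : B.adjoint = B)
    (u w : H) :
    (u, w) ∈ B.graph ↔ ∀ f : B.domain, ⟪(B f : H), u⟫_ℂ = ⟪(f : H), w⟫_ℂ := by
  constructor
  · intro h f
    rw [LinearPMap.mem_graph_iff] at h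
    obtain ⟨p, hp, hp2⟩ := h
    simp only at hp hp2
    subst hp
    rw [← hp2]
    exact DP_symm B hBdense hBsa f p
  · intro h
    have hmem : u ∈ B.adjoint.domain := by
      refine LinearPMap.mem_adjoint_domain_of_exists _ ⟨w, fun x => ?_⟩
      rw [← inner_conj_symm, ← h x, inner_conj_symm]
    have hval : B.adjoint ⟨u, hmem⟩ = w := by
      refine LinearPMap.adjoint_apply_eq hBdense _ (fun x => ?_)
      rw [← inner_conj_symm, ← h x, inner_conj_symm]
    have hg : (u, w) ∈ B.adjoint.graph := by
      rw [LinearPMap.mem_graph_iff]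
      exact ⟨⟨u, hmem⟩, rfl, hval⟩
    rwa [hBsa] at hg

lemma DP_isClosed (B : H →ₗ.[ℂ] H) (hBdense : Dense (B.domain : Set H)) (hBsa : B.adjoint = B) :
    IsClosed (B.graph : Set (H × H)) := by
  have : (B.graph : Set (H × H)) =
      ⋂ f : B.domain, {p : H × H | ⟪(B f : H), p.1⟫_ℂ = ⟪(f : H), p.2⟫_ℂ} := by
    ext ⟨u, w⟩
    simpa [Set.mem_iInter] using DP_graph_iff B hBdense hBsa u w
  rw [this]
  exact isClosed_iInter fun f => isClosed_eq
    (Continuous.inner continuous_const continuous_fst)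
    (Continuous.inner continuous_const continuous_snd)

lemma DP_graph_mem_fst (T : H →ₗ.[ℂ] H) {x y : H} (h : (x, y) ∈ T.graph) : x ∈ T.domain := by
  rw [LinearPMap.mem_graph_iff] at h
  obtain ⟨p, hp, -⟩ := h
  simp only at hp
  exact hp ▸ p.2

lemma DP_graph_val (T : H →ₗ.[ℂ] H) {x y : H} (h : (x, y) ∈ T.graph) (hx : x ∈ T.domain) :
    T ⟨x, hx⟩ = y :=
  DP_graph_unique T (T.mem_graph ⟨x, hx⟩) h

lemma DP_le_graph {T S : H →ₗ.[ℂ] H} (h : T ≤ S) {p : H × H} (hp : p ∈ T.graph) : p ∈ S.graph := by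
  rw [LinearPMap.mem_graph_iff] at hp ⊢
  obtain ⟨q, hq1, hq2⟩ := hp
  refine ⟨⟨(q : H), h.1 q.2⟩, hq1, ?_⟩
  rw [← hq2]
  exact (h.2 rfl).symm

lemma DP_relbound (B : H →ₗ.[ℂ] H) (hBclosed : IsClosed (B.graph : Set (H × H)))
    (R : H →ₗ.[ℂ] H) (hRclosable : R.IsClosable) (hRdom : B.domain ≤ R.domain) :
    ∃ a : ℝ, 0 ≤ a ∧ ∀ (x : B.domain) (hx : (x : H) ∈ R.domain),
      ‖R ⟨(x : H), hx⟩‖ ≤ a * ‖(x : H)‖ + a * ‖(B x : H)‖ := by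
  set Gr := B.graph with hGr
  haveI : CompleteSpace Gr := hBclosed.completeSpace_coe
  have memd : ∀ p : Gr, (p : H × H).1 ∈ R.domain := fun p =>
    hRdom (DP_graph_mem_fst B (x := (p : H × H).1) (y := (p : H × H).2) p.2)
  let φ : Gr →ₗ[ℂ] H :=
    { toFun := fun p => R ⟨(p : H × H).1, memd p⟩
      map_add' := fun p q => by rw [← LinearPMap.map_add]; rfl
      map_smul' := fun c p => by rw [← LinearPMap.map_smul]; rfl }
  have hφgraph : IsClosed (φ.graph : Set (Gr × H)) := by
    apply IsSeqClosed.isClosed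
    rintro x p hx hxp
    simp only [SetLike.mem_coe, LinearMap.mem_graph_iff] at hx ⊢
    have h1 : Filter.Tendsto (fun n => (x n).1) Filter.atTop (nhds p.1) :=
      (Continuous.tendsto continuous_fst p).comp hxp
    have h2 : Filter.Tendsto (fun n => (x n).2) Filter.atTop (nhds p.2) :=
      (Continuous.tendsto continuous_snd p).comp hxp
    have h1v : Filter.Tendsto (fun n => ((x n).1 : H × H).1) Filter.atTop
        (nhds ((p.1 : H × H).1)) :=
      (Continuous.tendsto (continuous_fst.comp continuous_subtype_val) p.1).comp h1
    have hmemR : ∀ n, (((x n).1 : H × H).1, φ (x n).1) ∈ R.graph := by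
      intro n
      exact R.mem_graph ⟨((x n).1 : H × H).1, memd _⟩
    have hxn2 : ∀ n, (x n).2 = φ (x n).1 := fun n => hx n
    have htend : Filter.Tendsto (fun n => ((((x n).1 : H × H).1, φ (x n).1) : H × H))
        Filter.atTop (nhds ((p.1 : H × H).1, p.2)) := by
      apply Filter.Tendsto.prodMk_nhds h1v
      simpa only [hxn2] using h2
    have hcl : ((p.1 : H × H).1, p.2) ∈ R.closure.graph := by
      rw [← hRclosable.graph_closure_eq_closure_graph, ← SetLike.mem_coe,
        Submodule.topologicalClosure_coe]
      exact mem_closure_of_tendsto htend (Filter.Eventually.of_forall hmemR)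
    have hRp : (((p.1 : H × H).1), R ⟨(p.1 : H × H).1, memd p.1⟩) ∈ R.closure.graph :=
      DP_le_graph R.le_closure (R.mem_graph ⟨(p.1 : H × H).1, memd p.1⟩)
    exact DP_graph_unique R.closure hcl hRp
  have hφcont : Continuous φ := φ.continuous_of_isClosed_graph hφgraph
  set L : Gr →L[ℂ] H := ⟨φ, hφcont⟩ with hL
  refine ⟨‖L‖, ContinuousLinearMap.opNorm_nonneg _, fun x hx => ?_⟩
  have hxg : ((x : H), (B x : H)) ∈ B.graph := B.mem_graph x
  set p : Gr := ⟨((x : H), (B x : H)), hxg⟩ with hp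
  have h1 : R ⟨(x : H), hx⟩ = L p := rfl
  have h2 : ‖L p‖ ≤ ‖L‖ * ‖p‖ := L.le_opNorm p
  have h3 : ‖p‖ = max ‖(x : H)‖ ‖(B x : H)‖ := rfl
  rw [h1]
  refine h2.trans ?_
  rw [h3]
  rcases max_cases ‖(x : H)‖ ‖(B x : H)‖ with ⟨h4, -⟩ | ⟨h4, -⟩ <;> rw [h4] <;> nlinarith [norm_nonneg (x : H), norm_nonneg (B x : H), ContinuousLinearMap.opNorm_nonneg L, mul_le_mul_of_nonneg_left (norm_nonneg (B x : H)) (ContinuousLinearMap.opNorm_nonneg L), mul_le_mul_of_nonneg_left (norm_nonneg (x : H)) (ContinuousLinearMap.opNorm_nonneg L)]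

lemma DP_Rtends (B : H →ₗ.[ℂ] H) (R : H →ₗ.[ℂ] H) (hRclosable : R.IsClosable)
    (hRdom : B.domain ≤ R.domain) (a : ℝ) (ha : 0 ≤ a)
    (hrb : ∀ (x : B.domain) (hx : (x : H) ∈ R.domain),
      ‖R ⟨(x : H), hx⟩‖ ≤ a * ‖(x : H)‖ + a * ‖(B x : H)‖)
    {f : ℕ → B.domain} {p : H} (hp : p ∈ R.domain)
    (h1 : Filter.Tendsto (fun n => ((f n : H))) Filter.atTop (nhds p))
    (h2 : CauchySeq (fun n => (B (f n) : H))) :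
    Filter.Tendsto (fun n => R ⟨(f n : H), hRdom (f n).2⟩) Filter.atTop (nhds (R ⟨p, hp⟩)) := by
  have hcf : CauchySeq (fun n => ((f n : H))) := h1.cauchySeq
  have hcR : CauchySeq (fun n => R ⟨(f n : H), hRdom (f n).2⟩) := by
    rw [Metric.cauchySeq_iff]
    intro ε hε
    have hε' : 0 < ε / (2 * a + 1) := by positivity
    obtain ⟨N1, hN1⟩ := Metric.cauchySeq_iff.mp hcf (ε / (2 * a + 1)) hε'
    obtain ⟨N2, hN2⟩ := Metric.cauchySeq_iff.mp h2 (ε / (2 * a + 1)) hε'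
    refine ⟨max N1 N2, fun m hm n hn => ?_⟩
    have d1 := hN1 m (le_of_max_le_left hm) n (le_of_max_le_left hn)
    have d2 := hN2 m (le_of_max_le_right hm) n (le_of_max_le_right hn)
    rw [dist_eq_norm] at d1 d2 ⊢
    have hsub : R ⟨(f m : H), hRdom (f m).2⟩ - R ⟨(f n : H), hRdom (f n).2⟩
        = R ⟨((f m - f n : B.domain) : H), hRdom (f m - f n).2⟩ := by
      rw [← LinearPMap.map_sub]
      congr 1
    rw [hsub]
    have hb := hrb (f m - f n) (hRdom (f m - f n).2)
    have e1 : ((f m - f n : B.domain) : H) = (f m : H) - (f n : H) := rfl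
    have e2 : (B (f m - f n) : H) = (B (f m) : H) - (B (f n) : H) := by
      rw [LinearPMap.map_sub]
    refine lt_of_le_of_lt hb ?_
    rw [e1, e2]
    have h3 : a * ‖(f m : H) - (f n : H)‖ ≤ a * (ε / (2 * a + 1)) :=
      mul_le_mul_of_nonneg_left d1.le ha
    have h4 : a * ‖(B (f m) : H) - (B (f n) : H)‖ ≤ a * (ε / (2 * a + 1)) :=
      mul_le_mul_of_nonneg_left d2.le ha
    have h5 : a * (ε / (2 * a + 1)) + a * (ε / (2 * a + 1)) < ε := by
      rw [div_eq_inv_mul]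
      have h6 : (2 * a + 1)⁻¹ * (2 * a) < 1 := by
        rw [inv_mul_lt_iff₀ (by positivity)]
        linarith
      have h7 : 0 < (2 * a + 1)⁻¹ * ε := by positivity
      nlinarith
    linarith
  obtain ⟨r, hr⟩ := cauchySeq_tendsto_of_complete hcR
  have hgr : ((p, r) : H × H) ∈ R.closure.graph := by
    rw [← hRclosable.graph_closure_eq_closure_graph, ← SetLike.mem_coe,
      Submodule.topologicalClosure_coe]
    refine mem_closure_of_tendsto (h1.prodMk_nhds hr) (Filter.Eventually.of_forall fun n => ?_)
    exact R.mem_graph ⟨(f n : H), hRdom (f n).2⟩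
  have : R ⟨p, hp⟩ = r := by
    have h5 : ((p, R ⟨p, hp⟩) : H × H) ∈ R.closure.graph :=
      DP_le_graph R.le_closure (R.mem_graph ⟨p, hp⟩)
    exact DP_graph_unique R.closure h5 hgr
  rwa [this]

lemma DP_vonNeumann (B : H →ₗ.[ℂ] H) (hBdense : Dense (B.domain : Set H))
    (hBsa : B.adjoint = B) :
    ∃ G : H →L[ℂ] H, (∀ v : H, ∃ (p q : B.domain),
      (p : H) = G v ∧ (q : H) = B p ∧ (p : H) + B q = v) ∧
      (∀ u v : H, ⟪G u, v⟫_ℂ = ⟪u, G v⟫_ℂ) := by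
  classical
  set e := WithLp.prodContinuousLinearEquiv 2 ℂ H H with he
  set K : Submodule ℂ (WithLp 2 (H × H)) :=
    B.graph.comap (WithLp.linearEquiv 2 ℂ (H × H)).toLinearMap with hK
  have hmemK : ∀ x : WithLp 2 (H × H), x ∈ K ↔ (x.fst, x.snd) ∈ B.graph := fun x => Iff.rfl
  have hKclosed : IsClosed (K : Set (WithLp 2 (H × H))) := by
    have : (K : Set (WithLp 2 (H × H))) = ⇑e ⁻¹' (B.graph : Set (H × H)) := rfl
    rw [this]
    exact (DP_isClosed B hBdense hBsa).preimage e.continuous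
  haveI : CompleteSpace K := hKclosed.completeSpace_coe
  set ιL : H →L[ℂ] WithLp 2 (H × H) :=
    e.symm.toContinuousLinearMap.comp (ContinuousLinearMap.inl ℂ H H) with hιL
  set πL : WithLp 2 (H × H) →L[ℂ] H :=
    (ContinuousLinearMap.fst ℂ H H).comp e.toContinuousLinearMap with hπL
  set G : H →L[ℂ] H := πL.comp ((K.subtypeL.comp K.orthogonalProjection).comp ιL) with hG
  have key : ∀ v : H, ∃ (p q : B.domain),
      (p : H) = G v ∧ (q : H) = B p ∧ (p : H) + B q = v := by
    intro v
    set y : K := K.orthogonalProjection (ιL v) with hy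
    have hyK : (((y : WithLp 2 (H × H))).fst, ((y : WithLp 2 (H × H))).snd) ∈ B.graph :=
      (hmemK _).mp y.2
    have hzo : ιL v - (y : WithLp 2 (H × H)) ∈ Kᗮ :=
      Submodule.sub_starProjection_mem_orthogonal (K := K) (ιL v)
    set z : WithLp 2 (H × H) := ιL v - (y : WithLp 2 (H × H)) with hzdef
    have hz2 : (z.snd, -z.fst) ∈ B.graph := by
      rw [DP_graph_iff B hBdense hBsa]
      intro f
      have hk : (WithLp.equiv 2 (H × H)).symm ((f : H), (B f : H)) ∈ K := by
        rw [hmemK]; exact B.mem_graph f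
      have h0 := Submodule.inner_right_of_mem_orthogonal hk hzo
      rw [WithLp.prod_inner_apply] at h0
      have h0' : ⟪(f : H), z.fst⟫_ℂ + ⟪(B f : H), z.snd⟫_ℂ = 0 := h0
      rw [inner_neg_right]
      linear_combination h0'
    have hp1 : ((y : WithLp 2 (H × H))).fst ∈ B.domain := DP_graph_mem_fst B hyK
    have hpval : B ⟨((y : WithLp 2 (H × H))).fst, hp1⟩ = ((y : WithLp 2 (H × H))).snd :=
      DP_graph_val B hyK hp1
    have hz2mem : z.snd ∈ B.domain := DP_graph_mem_fst B hz2
    have hz2val : B ⟨z.snd, hz2mem⟩ = -z.fst := DP_graph_val B hz2 hz2mem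
    have hsum : (y : WithLp 2 (H × H)) + z = ιL v := by rw [hzdef]; abel
    have h1 : ((y : WithLp 2 (H × H))).fst + z.fst = v := congrArg WithLp.fst hsum
    have h2 : ((y : WithLp 2 (H × H))).snd + z.snd = 0 := congrArg WithLp.snd hsum
    have hy2 : ((y : WithLp 2 (H × H))).snd = -z.snd := eq_neg_of_add_eq_zero_left h2
    have hq : ((y : WithLp 2 (H × H))).snd ∈ B.domain := by
      rw [hy2]; exact neg_mem hz2mem
    refine ⟨⟨((y : WithLp 2 (H × H))).fst, hp1⟩, ⟨((y : WithLp 2 (H × H))).snd, hq⟩, rfl, ?_, ?_⟩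
    · exact hpval.symm
    · have hqeq : (⟨((y : WithLp 2 (H × H))).snd, hq⟩ : B.domain) = -⟨z.snd, hz2mem⟩ :=
        Subtype.ext (by simpa using hy2)
      rw [hqeq, LinearPMap.map_neg, hz2val, neg_neg]
      exact h1
  refine ⟨G, key, fun u v => ?_⟩
  obtain ⟨a, qa, ha1, ha2, ha3⟩ := key u
  obtain ⟨b, qb, hb1, hb2, hb3⟩ := key v
  rw [← ha1, ← hb1, ← ha3, ← hb3]
  rw [inner_add_right, inner_add_left]
  have e1 : ⟪(B qa : H), (b : H)⟫_ℂ = ⟪(qa : H), (B b : H)⟫_ℂ := DP_symm B hBdense hBsa qa b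
  have e2 : ⟪(B qb : H), (a : H)⟫_ℂ = ⟪(qb : H), (B a : H)⟫_ℂ := DP_symm B hBdense hBsa qb a
  have e3 : ⟪(a : H), (B qb : H)⟫_ℂ = ⟪(B a : H), (qb : H)⟫_ℂ := by
    rw [← inner_conj_symm, e2, inner_conj_symm]
  rw [e3, e1, ha2, hb2]

lemma DP_core (B : H →ₗ.[ℂ] H) (hBdense : Dense (B.domain : Set H)) (hBsa : B.adjoint = B)
    (R : H →ₗ.[ℂ] H) (hRclosable : R.IsClosable) (hRdom : B.domain ≤ R.domain)
    (a : ℝ) (ha : 0 ≤ a)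
    (hrb : ∀ (x : B.domain) (hx : (x : H) ∈ R.domain),
      ‖R ⟨(x : H), hx⟩‖ ≤ a * ‖(x : H)‖ + a * ‖(B x : H)‖)
    (z : ℂ) (T : H →L[ℂ] H)
    (hT1 : ∀ w : H, ∃ (h1 : T w ∈ B.domain) (h2 : B ⟨T w, h1⟩ ∈ B.domain),
      B ⟨B ⟨T w, h1⟩, h2⟩ - (Complex.I * z) • R ⟨T w, hRdom h1⟩ - z ^ 2 • T w = w)
    (hT2 : ∀ (x : H) (hx : x ∈ B.domain) (hBx : B ⟨x, hx⟩ ∈ B.domain),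
      T (B ⟨B ⟨x, hx⟩, hBx⟩ - (Complex.I * z) • R ⟨x, hRdom hx⟩ - z ^ 2 • x) = x) :
    ∃ C D E : H →L[ℂ] H,
      (∀ u : H, ∃ (h1 : T u ∈ B.domain), E u = B ⟨T u, h1⟩) ∧
      ∀ v : H, ∃ (hC : C v ∈ B.domain) (hD : D v - v ∈ B.domain),
        B ⟨C v, hC⟩ = D v ∧
        B ⟨D v - v, hD⟩ = (Complex.I * z) • R ⟨C v, hRdom hC⟩ + z ^ 2 • C v := by
  classical
  obtain ⟨G, keyG, symG⟩ := DP_vonNeumann B hBdense hBsa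
  have hsym := DP_symm B hBdense hBsa
  -- bounds for G
  have boundG : ∀ h : H, ∀ (p q : B.domain),
      (p : H) = G h → (q : H) = B p → (p : H) + B q = h →
      ‖(p : H)‖ ≤ ‖h‖ ∧ ‖(B p : H)‖ ≤ ‖h‖ := by
    intro h p q hp hq hsum
    have hBq : (B q : H) = B ⟨(B p : H), hq ▸ q.2⟩ := by
      congr 1
      exact Subtype.ext hq
    have key : ((‖(p : H)‖^2 : ℝ) : ℂ) + ((‖(B p : H)‖^2 : ℝ) : ℂ) = ⟪h, (p : H)⟫_ℂ := by
      rw [← hsum, inner_add_left]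
      have e1 : ⟪(p : H), (p : H)⟫_ℂ = ((‖(p : H)‖^2 : ℝ) : ℂ) := by
        rw [inner_self_eq_norm_sq_to_K]; norm_cast
      have e2 : ⟪(B q : H), (p : H)⟫_ℂ = ((‖(B p : H)‖^2 : ℝ) : ℂ) := by
        rw [hsym q p, hq]
        rw [inner_self_eq_norm_sq_to_K]; norm_cast
      rw [e1, e2]
    have habs : ‖(p : H)‖^2 + ‖(B p : H)‖^2 ≤ ‖h‖ * ‖(p : H)‖ := by
      have h1 : ‖(‖(p : H)‖^2 + ‖(B p : H)‖^2 : ℝ)‖ = ‖⟪h, (p : H)⟫_ℂ‖ := by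
        rw [← Complex.norm_real]
        congr 1
        exact_mod_cast key
      have h2 : ‖⟪h, (p : H)⟫_ℂ‖ ≤ ‖h‖ * ‖(p : H)‖ := norm_inner_le_norm _ _
      have h3 : ‖(‖(p : H)‖^2 + ‖(B p : H)‖^2 : ℝ)‖ = ‖(p : H)‖^2 + ‖(B p : H)‖^2 := by
        rw [Real.norm_eq_abs, abs_of_nonneg (by positivity)]
      linarith
    constructor
    · exact DP_le1 (norm_nonneg _) (norm_nonneg _) (by nlinarith [sq_nonneg ‖(B p : H)‖])
    · refine DP_le2 (norm_nonneg _) (norm_nonneg _) ?_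
      nlinarith [sq_nonneg ‖(p : H)‖, norm_nonneg (p : H), norm_nonneg h,
        mul_le_mul_of_nonneg_left habs (le_of_lt one_pos)]
  have norm_inner_self : ∀ x : H, ‖⟪x, x⟫_ℂ‖ = ‖x‖^2 := by
    intro x
    rw [inner_self_eq_norm_sq_to_K, norm_pow]
    simp
  have boundGB : ∀ v : B.domain, ‖G (B v : H)‖ ≤ ‖(v : H)‖ := by
    intro v
    set h' := G (B v : H) with hh'
    obtain ⟨p', q', hp', hq', hsum'⟩ := keyG h'
    have e0 : ⟪h', h'⟫_ℂ = ⟪(B v : H), G h'⟫_ℂ := by rw [hh', symG]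
    have e1 : ⟪(B v : H), G h'⟫_ℂ = ⟪(v : H), (B p' : H)⟫_ℂ := by
      rw [← hp']
      exact hsym v p'
    have hnorm : ‖h'‖^2 ≤ ‖(v : H)‖ * ‖h'‖ := by
      have h2 : ‖⟪(v : H), (B p' : H)⟫_ℂ‖ ≤ ‖(v : H)‖ * ‖(B p' : H)‖ := norm_inner_le_norm _ _
      have h3 : ‖(B p' : H)‖ ≤ ‖h'‖ := (boundG h' p' q' hp' hq' hsum').2
      have h4 : ‖h'‖^2 = ‖⟪(v : H), (B p' : H)⟫_ℂ‖ := by rw [← e1, ← e0, norm_inner_self]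
      rw [h4]
      refine h2.trans ?_
      exact mul_le_mul_of_nonneg_left h3 (norm_nonneg _)
    exact DP_le1 (norm_nonneg _) (norm_nonneg _) hnorm
  have boundGB2 : ∀ (v p q : B.domain), (p : H) = G (B v : H) → (q : H) = B p →
      (p : H) + B q = (B v : H) → ‖(p : H)‖ ≤ ‖(v : H)‖ ∧ ‖(B p : H)‖ ≤ ‖(v : H)‖ := by
    intro v p q hp hq hsum
    constructor
    · rw [hp]; exact boundGB v
    · have e1 : ⟪(B q : H), (p : H)⟫_ℂ = ((‖(B p : H)‖^2 : ℝ) : ℂ) := by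
        rw [hsym q p, hq, inner_self_eq_norm_sq_to_K]
        norm_cast
      have e2 : (B q : H) = (B v : H) - (p : H) := by
        rw [← hsum]; abel
      have e3 : ⟪(B v : H), (p : H)⟫_ℂ = ⟪(v : H), (B p : H)⟫_ℂ := hsym v p
      have key : ((‖(B p : H)‖^2 : ℝ) : ℂ) + ((‖(p : H)‖^2 : ℝ) : ℂ)
          = ⟪(v : H), (B p : H)⟫_ℂ := by
        rw [← e3, ← e1, e2, inner_sub_left]
        have : ⟪(p : H), (p : H)⟫_ℂ = ((‖(p : H)‖^2 : ℝ) : ℂ) := by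
          rw [inner_self_eq_norm_sq_to_K]; norm_cast
        rw [this]
        ring
      have habs : ‖(B p : H)‖^2 + ‖(p : H)‖^2 ≤ ‖(v : H)‖ * ‖(B p : H)‖ := by
        have h1 : ‖(‖(B p : H)‖^2 + ‖(p : H)‖^2 : ℝ)‖ = ‖⟪(v : H), (B p : H)⟫_ℂ‖ := by
          rw [← Complex.norm_real]
          congr 1
          exact_mod_cast key
        have h2 : ‖⟪(v : H), (B p : H)⟫_ℂ‖ ≤ ‖(v : H)‖ * ‖(B p : H)‖ := norm_inner_le_norm _ _
        have h3 : ‖(‖(B p : H)‖^2 + ‖(p : H)‖^2 : ℝ)‖ = ‖(B p : H)‖^2 + ‖(p : H)‖^2 := by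
          rw [Real.norm_eq_abs, abs_of_nonneg (by positivity)]
        linarith
      exact DP_le1 (norm_nonneg _) (norm_nonneg _) (by nlinarith [sq_nonneg ‖(p : H)‖])
  set Ts := ContinuousLinearMap.adjoint T with hTs
  set nT : ℝ := ‖Ts‖ with hnT
  have hnT0 : 0 ≤ nT := norm_nonneg _
  set az : ℝ := ‖z‖ with haz
  have haz0 : 0 ≤ az := norm_nonneg _
  have step2 : ∀ (x : H) (hx : x ∈ B.domain) (hBx : B ⟨x, hx⟩ ∈ B.domain) (h : H),
      ‖⟪(B ⟨(B ⟨x, hx⟩ : H), hBx⟩ : H), Ts h⟫_ℂ‖ ≤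
        (‖x‖ + az * nT * (a * ‖x‖ + a * ‖(B ⟨x, hx⟩ : H)‖) + az^2 * nT * ‖x‖) * ‖h‖ := by
    intro x hx hBx h
    have hTM := hT2 x hx hBx
    have e1 : ⟪(B ⟨(B ⟨x, hx⟩ : H), hBx⟩ : H) - (Complex.I * z) • (R ⟨x, hRdom hx⟩ : H)
        - z ^ 2 • x, Ts h⟫_ℂ = ⟪x, h⟫_ℂ := by
      rw [ContinuousLinearMap.adjoint_inner_right, hTM]
    rw [inner_sub_left, inner_sub_left] at e1
    have e2 : ⟪(B ⟨(B ⟨x, hx⟩ : H), hBx⟩ : H), Ts h⟫_ℂ = ⟪x, h⟫_ℂ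
        + ⟪(Complex.I * z) • (R ⟨x, hRdom hx⟩ : H), Ts h⟫_ℂ + ⟪z ^ 2 • x, Ts h⟫_ℂ := by
      linear_combination e1
    rw [e2]
    have hTsh : ‖Ts h‖ ≤ nT * ‖h‖ := Ts.le_opNorm h
    have b1 : ‖⟪x, h⟫_ℂ‖ ≤ ‖x‖ * ‖h‖ := norm_inner_le_norm _ _
    have b2 : ‖⟪(Complex.I * z) • (R ⟨x, hRdom hx⟩ : H), Ts h⟫_ℂ‖
        ≤ az * ((a * ‖x‖ + a * ‖(B ⟨x, hx⟩ : H)‖) * (nT * ‖h‖)) := by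
      rw [inner_smul_left]
      rw [norm_mul]
      have : ‖(starRingEnd ℂ) (Complex.I * z)‖ = az := by
        rw [RingHomIsometric.norm_map]
        rw [norm_mul, Complex.norm_I, one_mul]
      rw [this]
      refine mul_le_mul_of_nonneg_left ?_ haz0
      refine (norm_inner_le_norm _ _).trans ?_
      have hra := hrb ⟨x, hx⟩ (hRdom hx)
      exact mul_le_mul hra hTsh (norm_nonneg _) (by positivity)
    have b3 : ‖⟪z ^ 2 • x, Ts h⟫_ℂ‖ ≤ az^2 * (‖x‖ * (nT * ‖h‖)) := by
      rw [inner_smul_left, norm_mul]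
      have : ‖(starRingEnd ℂ) (z ^ 2)‖ = az^2 := by
        rw [RingHomIsometric.norm_map, norm_pow]
      rw [this]
      refine mul_le_mul_of_nonneg_left ?_ (by positivity)
      refine (norm_inner_le_norm _ _).trans ?_
      exact mul_le_mul_of_nonneg_left hTsh (norm_nonneg _)
    calc ‖⟪x, h⟫_ℂ + ⟪(Complex.I * z) • (R ⟨x, hRdom hx⟩ : H), Ts h⟫_ℂ + ⟪z ^ 2 • x, Ts h⟫_ℂ‖
        ≤ ‖⟪x, h⟫_ℂ‖ + ‖⟪(Complex.I * z) • (R ⟨x, hRdom hx⟩ : H), Ts h⟫_ℂ‖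
          + ‖⟪z ^ 2 • x, Ts h⟫_ℂ‖ := norm_add₃_le
      _ ≤ ‖x‖ * ‖h‖ + az * ((a * ‖x‖ + a * ‖(B ⟨x, hx⟩ : H)‖) * (nT * ‖h‖))
          + az^2 * (‖x‖ * (nT * ‖h‖)) := by gcongr  -- might fail; use add_le_add
      _ = (‖x‖ + az * nT * (a * ‖x‖ + a * ‖(B ⟨x, hx⟩ : H)‖) + az^2 * nT * ‖x‖) * ‖h‖ := by ring
  set K : ℝ := nT + 1 + 2*a*az*nT + az^2*nT with hK
  have hK0 : 0 ≤ K := by positivity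
  have step3 : ∀ (v : B.domain) (h : H),
      ‖⟪T (B v : H), h⟫_ℂ‖ ≤ K * ‖(v : H)‖ * ‖h‖ := by
    intro v h
    obtain ⟨p, q, hp, hq, hsum⟩ := keyG (B v : H)
    have e0 : ⟪T (B v : H), h⟫_ℂ = ⟪(B v : H), Ts h⟫_ℂ :=
      (ContinuousLinearMap.adjoint_inner_right T _ _).symm
    have hBps : (B p : H) ∈ B.domain := hq ▸ q.2
    have hqe : q = ⟨(B p : H), hBps⟩ := Subtype.ext hq
    have hBq : (B q : H) = (B ⟨(B ⟨(p : H), p.2⟩ : H), hBps⟩ : H) := by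
      rw [hqe]
    have hbounds := boundGB2 v p q hp hq hsum
    have hs2 := step2 (p : H) p.2 hBps h
    have e1 : ⟪(B v : H), Ts h⟫_ℂ = ⟪(p : H), Ts h⟫_ℂ + ⟪(B q : H), Ts h⟫_ℂ := by
      rw [← hsum, inner_add_left]
    have b1 : ‖⟪(p : H), Ts h⟫_ℂ‖ ≤ ‖(v : H)‖ * (nT * ‖h‖) := by
      refine (norm_inner_le_norm _ _).trans ?_
      exact mul_le_mul hbounds.1 (Ts.le_opNorm h) (norm_nonneg _) (norm_nonneg _)
    have b2 : ‖⟪(B q : H), Ts h⟫_ℂ‖ ≤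
        (‖(v : H)‖ + az * nT * (a * ‖(v : H)‖ + a * ‖(v : H)‖) + az^2 * nT * ‖(v : H)‖) * ‖h‖ := by
      rw [hBq]
      refine hs2.trans ?_
      have h1 : ‖(p : H)‖ ≤ ‖(v : H)‖ := hbounds.1
      have h2 : ‖(B ⟨(p : H), p.2⟩ : H)‖ ≤ ‖(v : H)‖ := hbounds.2
      gcongr
    rw [e0, e1]
    calc ‖⟪(p : H), Ts h⟫_ℂ + ⟪(B q : H), Ts h⟫_ℂ‖
        ≤ ‖⟪(p : H), Ts h⟫_ℂ‖ + ‖⟪(B q : H), Ts h⟫_ℂ‖ := norm_add_le _ _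
      _ ≤ ‖(v : H)‖ * (nT * ‖h‖)
          + (‖(v : H)‖ + az * nT * (a * ‖(v : H)‖ + a * ‖(v : H)‖) + az^2 * nT * ‖(v : H)‖) * ‖h‖ :=
        add_le_add b1 b2
      _ = K * ‖(v : H)‖ * ‖h‖ := by rw [hK]; ring
  have normTB : ∀ v : B.domain, ‖T (B v : H)‖ ≤ K * ‖(v : H)‖ := by
    intro v
    refine DP_le1 (norm_nonneg _) (by positivity) ?_
    have := step3 v (T (B v : H))
    rw [norm_inner_self] at this
    linarith
  -- the function u ↦ B (T u) and its identities
  have hTdom : ∀ u : H, T u ∈ B.domain := fun u => (hT1 u).choose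
  have hBTdom : ∀ u : H, (B ⟨T u, hTdom u⟩ : H) ∈ B.domain := fun u => (hT1 u).choose_spec.choose
  have hT1eq : ∀ u : H, (B ⟨(B ⟨T u, hTdom u⟩ : H), hBTdom u⟩ : H)
      - (Complex.I * z) • (R ⟨T u, hRdom (hTdom u)⟩ : H) - z ^ 2 • T u = u :=
    fun u => (hT1 u).choose_spec.choose_spec
  set Efun : H → H := fun u => (B ⟨T u, hTdom u⟩ : H) with hEfun
  have hT1eq' : ∀ u : H, (B ⟨Efun u, hBTdom u⟩ : H)
      = u + (Complex.I * z) • (R ⟨T u, hRdom (hTdom u)⟩ : H) + z ^ 2 • T u := by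
    intro u
    have e2 : (B ⟨(B ⟨T u, hTdom u⟩ : H), hBTdom u⟩ : H)
        - ((Complex.I * z) • (R ⟨T u, hRdom (hTdom u)⟩ : H) + z ^ 2 • T u) = u := by
      rw [← sub_sub]; exact hT1eq u
    have e3 := eq_add_of_sub_eq e2
    show (B ⟨(B ⟨T u, hTdom u⟩ : H), hBTdom u⟩ : H) = _
    rw [e3]; abel
  have ident : ∀ u : H, ⟪Efun u, Efun u⟫_ℂ = ⟪T u, u⟫_ℂ
      + (Complex.I * z) * ⟪T u, (R ⟨T u, hRdom (hTdom u)⟩ : H)⟫_ℂ + z ^ 2 * ⟪T u, T u⟫_ℂ := by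
    intro u
    have e0 : ⟪Efun u, Efun u⟫_ℂ = ⟪T u, (B ⟨Efun u, hBTdom u⟩ : H)⟫_ℂ :=
      hsym ⟨T u, hTdom u⟩ ⟨Efun u, hBTdom u⟩
    rw [e0, hT1eq', inner_add_right, inner_add_right, inner_smul_right, inner_smul_right]
  have normBT : ∀ u : H, ‖Efun u‖ ≤ (az*a*‖T‖ + Real.sqrt (‖T‖ + az*a*‖T‖^2 + az^2*‖T‖^2)) * ‖u‖ := by
    intro u
    have hTu : ‖T u‖ ≤ ‖T‖ * ‖u‖ := T.le_opNorm u
    have hRu : ‖(R ⟨T u, hRdom (hTdom u)⟩ : H)‖ ≤ a * ‖T u‖ + a * ‖Efun u‖ :=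
      hrb ⟨T u, hTdom u⟩ (hRdom (hTdom u))
    have hnorm : ‖Efun u‖^2 ≤ (‖T‖ + az*a*‖T‖^2 + az^2*‖T‖^2) * ‖u‖^2
        + (az*a*‖T‖) * ‖u‖ * ‖Efun u‖ := by
      have h1 : ‖Efun u‖^2 = ‖⟪Efun u, Efun u⟫_ℂ‖ := (norm_inner_self _).symm
      rw [h1, ident u]
      calc ‖⟪T u, u⟫_ℂ + (Complex.I * z) * ⟪T u, (R ⟨T u, hRdom (hTdom u)⟩ : H)⟫_ℂ
            + z ^ 2 * ⟪T u, T u⟫_ℂ‖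
          ≤ ‖⟪T u, u⟫_ℂ‖ + ‖(Complex.I * z) * ⟪T u, (R ⟨T u, hRdom (hTdom u)⟩ : H)⟫_ℂ‖
            + ‖z ^ 2 * ⟪T u, T u⟫_ℂ‖ := norm_add₃_le
        _ ≤ ‖T u‖ * ‖u‖ + az * (‖T u‖ * (a * ‖T u‖ + a * ‖Efun u‖)) + az^2 * (‖T u‖ * ‖T u‖) := by
            have b1 : ‖⟪T u, u⟫_ℂ‖ ≤ ‖T u‖ * ‖u‖ := norm_inner_le_norm _ _
            have b2 : ‖(Complex.I * z) * ⟪T u, (R ⟨T u, hRdom (hTdom u)⟩ : H)⟫_ℂ‖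
                ≤ az * (‖T u‖ * (a * ‖T u‖ + a * ‖Efun u‖)) := by
              rw [norm_mul, norm_mul, Complex.norm_I, one_mul]
              refine mul_le_mul_of_nonneg_left ?_ haz0
              refine (norm_inner_le_norm _ _).trans ?_
              exact mul_le_mul_of_nonneg_left hRu (norm_nonneg _)
            have b3 : ‖z ^ 2 * ⟪T u, T u⟫_ℂ‖ ≤ az^2 * (‖T u‖ * ‖T u‖) := by
              rw [norm_mul, norm_pow]
              refine mul_le_mul_of_nonneg_left (norm_inner_le_norm _ _) (by positivity)
            exact add_le_add (add_le_add b1 b2) b3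
        _ ≤ (‖T‖ + az*a*‖T‖^2 + az^2*‖T‖^2) * ‖u‖^2 + (az*a*‖T‖) * ‖u‖ * ‖Efun u‖ := by
            have hsq : ‖T u‖ * ‖T u‖ ≤ (‖T‖*‖u‖) * (‖T‖*‖u‖) :=
              mul_self_le_mul_self (norm_nonneg _) hTu
            have hE : ‖T u‖ * ‖Efun u‖ ≤ (‖T‖*‖u‖) * ‖Efun u‖ :=
              mul_le_mul_of_nonneg_right hTu (norm_nonneg _)
            have hU : ‖T u‖ * ‖u‖ ≤ (‖T‖*‖u‖) * ‖u‖ :=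
              mul_le_mul_of_nonneg_right hTu (norm_nonneg _)
            nlinarith [mul_le_mul_of_nonneg_left hsq (mul_nonneg haz0 ha),
              mul_le_mul_of_nonneg_left hsq (by positivity : (0:ℝ) ≤ az^2),
              mul_le_mul_of_nonneg_left hE (mul_nonneg haz0 ha), hU]
    exact DP_quad (norm_nonneg _) (norm_nonneg _) (by positivity) (by positivity) hnorm
  have normBTB : ∀ v : B.domain, ‖Efun (B v : H)‖ ≤
      ((1 + az*a*K) + Real.sqrt (az*a*K^2 + az^2*K^2)) * ‖(v : H)‖ := by
    intro v
    set u := (B v : H) with hu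
    have hfK : ‖T u‖ ≤ K * ‖(v : H)‖ := normTB v
    have hRu : ‖(R ⟨T u, hRdom (hTdom u)⟩ : H)‖ ≤ a * ‖T u‖ + a * ‖Efun u‖ :=
      hrb ⟨T u, hTdom u⟩ (hRdom (hTdom u))
    have e2 : ⟪T u, u⟫_ℂ = ⟪Efun u, (v : H)⟫_ℂ := by
      rw [hu]
      exact (hsym ⟨T u, hTdom u⟩ v).symm
    have hnorm : ‖Efun u‖^2 ≤ (az*a*K^2 + az^2*K^2) * ‖(v : H)‖^2
        + (1 + az*a*K) * ‖(v : H)‖ * ‖Efun u‖ := by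
      have h1 : ‖Efun u‖^2 = ‖⟪Efun u, Efun u⟫_ℂ‖ := (norm_inner_self _).symm
      rw [h1, ident u, e2]
      calc ‖⟪Efun u, (v : H)⟫_ℂ + (Complex.I * z) * ⟪T u, (R ⟨T u, hRdom (hTdom u)⟩ : H)⟫_ℂ
            + z ^ 2 * ⟪T u, T u⟫_ℂ‖
          ≤ ‖⟪Efun u, (v : H)⟫_ℂ‖
            + ‖(Complex.I * z) * ⟪T u, (R ⟨T u, hRdom (hTdom u)⟩ : H)⟫_ℂ‖
            + ‖z ^ 2 * ⟪T u, T u⟫_ℂ‖ := norm_add₃_le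
        _ ≤ ‖Efun u‖ * ‖(v : H)‖ + az * (‖T u‖ * (a * ‖T u‖ + a * ‖Efun u‖))
            + az^2 * (‖T u‖ * ‖T u‖) := by
            have b1 : ‖⟪Efun u, (v : H)⟫_ℂ‖ ≤ ‖Efun u‖ * ‖(v : H)‖ := norm_inner_le_norm _ _
            have b2 : ‖(Complex.I * z) * ⟪T u, (R ⟨T u, hRdom (hTdom u)⟩ : H)⟫_ℂ‖
                ≤ az * (‖T u‖ * (a * ‖T u‖ + a * ‖Efun u‖)) := by
              rw [norm_mul, norm_mul, Complex.norm_I, one_mul]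
              refine mul_le_mul_of_nonneg_left ?_ haz0
              refine (norm_inner_le_norm _ _).trans ?_
              exact mul_le_mul_of_nonneg_left hRu (norm_nonneg _)
            have b3 : ‖z ^ 2 * ⟪T u, T u⟫_ℂ‖ ≤ az^2 * (‖T u‖ * ‖T u‖) := by
              rw [norm_mul, norm_pow]
              refine mul_le_mul_of_nonneg_left (norm_inner_le_norm _ _) (by positivity)
            exact add_le_add (add_le_add b1 b2) b3
        _ ≤ (az*a*K^2 + az^2*K^2) * ‖(v : H)‖^2 + (1 + az*a*K) * ‖(v : H)‖ * ‖Efun u‖ := by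
            have hsq : ‖T u‖ * ‖T u‖ ≤ (K*‖(v : H)‖) * (K*‖(v : H)‖) :=
              mul_self_le_mul_self (norm_nonneg _) hfK
            have hE : ‖T u‖ * ‖Efun u‖ ≤ (K*‖(v : H)‖) * ‖Efun u‖ :=
              mul_le_mul_of_nonneg_right hfK (norm_nonneg _)
            nlinarith [mul_le_mul_of_nonneg_left hsq (mul_nonneg haz0 ha),
              mul_le_mul_of_nonneg_left hsq (by positivity : (0:ℝ) ≤ az^2),
              mul_le_mul_of_nonneg_left hE (mul_nonneg haz0 ha)]
    exact DP_quad (norm_nonneg _) (norm_nonneg _) (by positivity) (by positivity) hnorm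
  set K4 : ℝ := az*a*‖T‖ + Real.sqrt (‖T‖ + az*a*‖T‖^2 + az^2*‖T‖^2) with hK4
  set K3 : ℝ := (1 + az*a*K) + Real.sqrt (az*a*K^2 + az^2*K^2) with hK3
  have hEadd : ∀ u u' : H, Efun (u + u') = Efun u + Efun u' := by
    intro u u'
    have h1 : (⟨T (u + u'), hTdom (u+u')⟩ : B.domain) = ⟨T u, hTdom u⟩ + ⟨T u', hTdom u'⟩ :=
      Subtype.ext (by simp)
    show (B ⟨T (u+u'), hTdom (u+u')⟩ : H) = _
    rw [h1, LinearPMap.map_add]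
  have hEsmul : ∀ (c : ℂ) (u : H), Efun (c • u) = c • Efun u := by
    intro c u
    have h1 : (⟨T (c • u), hTdom (c • u)⟩ : B.domain) = c • (⟨T u, hTdom u⟩ : B.domain) :=
      Subtype.ext (by simp)
    show (B ⟨T (c • u), hTdom (c • u)⟩ : H) = _
    rw [h1, LinearPMap.map_smul]
  set E : H →L[ℂ] H := LinearMap.mkContinuous
    { toFun := Efun, map_add' := hEadd, map_smul' := hEsmul } K4 normBT with hE
  set C0 : B.domain →L[ℂ] H := LinearMap.mkContinuous
    { toFun := fun v : B.domain => T (B v : H)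
      map_add' := by
        intro v w
        show T (B (v + w) : H) = T (B v : H) + T (B w : H)
        rw [LinearPMap.map_add, map_add]
      map_smul' := by
        intro c v
        show T (B (c • v) : H) = c • T (B v : H)
        rw [LinearPMap.map_smul, map_smul] } K normTB with hC0
  set D0 : B.domain →L[ℂ] H := LinearMap.mkContinuous
    { toFun := fun v : B.domain => Efun (B v : H)
      map_add' := by
        intro v w
        show Efun (B (v + w) : H) = Efun (B v : H) + Efun (B w : H)
        rw [LinearPMap.map_add, hEadd]
      map_smul' := by
        intro c v
        show Efun (B (c • v) : H) = c • Efun (B v : H)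
        rw [LinearPMap.map_smul, hEsmul] } K3 normBTB with hD0
  set C : H →L[ℂ] H := C0.extend B.domain.subtypeL with hC
  set D : H →L[ℂ] H := D0.extend B.domain.subtypeL with hD
  have hCeq : ∀ v : B.domain, C (v : H) = T (B v : H) := fun v =>
    ContinuousLinearMap.extend_eq _ hBdense.denseRange_val isUniformEmbedding_subtype_val.isUniformInducing v
  have hDeq : ∀ v : B.domain, D (v : H) = Efun (B v : H) := fun v =>
    ContinuousLinearMap.extend_eq _ hBdense.denseRange_val isUniformEmbedding_subtype_val.isUniformInducing v
  refine ⟨C, D, E, fun u => ⟨hTdom u, rfl⟩, ?_⟩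
  intro v
  obtain ⟨seq, hseqmem, hseqlim⟩ := mem_closure_iff_seq_limit.mp (hBdense v)
  set wn : ℕ → B.domain := fun n => ⟨seq n, hseqmem n⟩ with hwn
  have hCw : ∀ n, C (seq n) = T (B (wn n) : H) := fun n => hCeq (wn n)
  have hDw : ∀ n, D (seq n) = Efun (B (wn n) : H) := fun n => hDeq (wn n)
  have hCtend : Filter.Tendsto (fun n => C (seq n)) Filter.atTop (nhds (C v)) :=
    (C.continuous.tendsto v).comp hseqlim
  have hDtend : Filter.Tendsto (fun n => D (seq n)) Filter.atTop (nhds (D v)) :=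
    (D.continuous.tendsto v).comp hseqlim
  have hgr : ∀ n, ((C (seq n), D (seq n)) : H × H) ∈ B.graph := by
    intro n
    rw [hCw n, hDw n]
    exact B.mem_graph ⟨T (B (wn n) : H), hTdom _⟩
  have hCvgr : ((C v, D v) : H × H) ∈ B.graph :=
    (DP_isClosed B hBdense hBsa).mem_of_tendsto (hCtend.prodMk_nhds hDtend)
      (Filter.Eventually.of_forall hgr)
  have hCv : C v ∈ B.domain := DP_graph_mem_fst B hCvgr
  have hBCv : B ⟨C v, hCv⟩ = D v := DP_graph_val B hCvgr hCv
  set pn : ℕ → B.domain := fun n => ⟨C (seq n), by rw [hCw n]; exact hTdom _⟩ with hpn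
  have hBpn : ∀ n, (B (pn n) : H) = D (seq n) := by
    intro n
    exact DP_graph_val B (hgr n) (pn n).2
  have hRtend : Filter.Tendsto (fun n => (R ⟨(pn n : H), hRdom (pn n).2⟩ : H)) Filter.atTop
      (nhds (R ⟨C v, hRdom hCv⟩)) := by
    refine DP_Rtends B R hRclosable hRdom a ha hrb (hRdom hCv) hCtend ?_
    have heq : (fun n => (B (pn n) : H)) = fun n => D (seq n) := funext hBpn
    rw [heq]
    exact hDtend.cauchySeq
  have hmem2 : ∀ n, ((D (seq n) - seq n,
      (Complex.I * z) • (R ⟨(pn n : H), hRdom (pn n).2⟩ : H) + z ^ 2 • C (seq n)) : H × H)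
      ∈ B.graph := by
    intro n
    set u := (B (wn n) : H) with hu
    have hDmem : D (seq n) ∈ B.domain := by rw [hDw n]; exact hBTdom u
    have hsubmem : D (seq n) - seq n ∈ B.domain := sub_mem hDmem (hseqmem n)
    have hq : (⟨D (seq n) - seq n, hsubmem⟩ : B.domain)
        = ⟨D (seq n), hDmem⟩ - wn n := Subtype.ext rfl
    have hval : B ⟨D (seq n) - seq n, hsubmem⟩
        = (Complex.I * z) • (R ⟨(pn n : H), hRdom (pn n).2⟩ : H) + z ^ 2 • C (seq n) := by
      rw [hq, LinearPMap.map_sub]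
      have h5 : (⟨D (seq n), hDmem⟩ : B.domain) = ⟨Efun u, hBTdom u⟩ := Subtype.ext (hDw n)
      rw [h5, hT1eq' u]
      have h6 : (B (wn n) : H) = u := rfl
      rw [h6]
      have h7 : (⟨T u, hRdom (hTdom u)⟩ : R.domain) = ⟨(pn n : H), hRdom (pn n).2⟩ :=
        Subtype.ext (hCw n).symm
      rw [h7]
      have h8 : T u = C (seq n) := (hCw n).symm
      rw [h8]
      abel
    have := B.mem_graph ⟨D (seq n) - seq n, hsubmem⟩
    rwa [hval] at this
  have hlim2 : Filter.Tendsto (fun n => ((D (seq n) - seq n,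
      (Complex.I * z) • (R ⟨(pn n : H), hRdom (pn n).2⟩ : H) + z ^ 2 • C (seq n)) : H × H))
      Filter.atTop
      (nhds ((D v - v, (Complex.I * z) • (R ⟨C v, hRdom hCv⟩ : H) + z ^ 2 • C v))) := by
    refine Filter.Tendsto.prodMk_nhds (hDtend.sub hseqlim) ?_
    exact (hRtend.const_smul _).add (hCtend.const_smul _)
  have hgr2 : ((D v - v, (Complex.I * z) • (R ⟨C v, hRdom hCv⟩ : H) + z ^ 2 • C v) : H × H)
      ∈ B.graph :=
    (DP_isClosed B hBdense hBsa).mem_of_tendsto hlim2 (Filter.Eventually.of_forall hmem2)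
  have hDv : D v - v ∈ B.domain := DP_graph_mem_fst B hgr2
  exact ⟨hCv, hDv, hBCv, DP_graph_val B hgr2 hDv⟩

end DPAux

/-- Theorem 5.3. Let `B` be self-adjoint in `H` with `ker(B) = {0}` and let
`R` be densely defined closable with `dom(R) ∩ dom(R*) ⊇ dom(B)`.  The Dirac-type operator
`Q(f,g) = (−iRf + Bg, Bf)` on `dom(B) ⊕ dom(B)` in `H ⊕ H` is injective and closed, and for
every `z ≠ 0`, `Q − zI` is boundedly invertible iff the pencil `M(z) = B² − izR − z²I` (on
`dom(B²)`) is.  In particular, if moreover `inf σ(B²) = 0` (i.e. `B²` is not boundedly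
invertible), then `σ(Q) ∪ {0} = σ(M(·))`. -/
theorem dirac_pencil_spectrum_inf_zero
    {H : Type*}
    [NormedAddCommGroup H] [InnerProductSpace ℂ H] [CompleteSpace H]
    [TopologicalSpace.SeparableSpace H]
    (B : H →ₗ.[ℂ] H)
    (hBdense : Dense (B.domain : Set H))
    (hBsa : B.adjoint = B)
    (hBker : ∀ f : B.domain, B f = 0 → (f : H) = 0)
    (R : H →ₗ.[ℂ] H)
    (hRdense : Dense (R.domain : Set H))
    (hRclosable : R.IsClosable)
    (hRdom : B.domain ≤ R.domain)
    (hRstardom : B.domain ≤ R.adjoint.domain)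
    -- `B² = B ∘ B` with its natural domain:
    (B2 : H →ₗ.[ℂ] H)
    (hB2 : ∀ (x y : H), (x, y) ∈ B2.graph ↔
      ∃ (hx : x ∈ B.domain) (hBx : B ⟨x, hx⟩ ∈ B.domain), B ⟨B ⟨x, hx⟩, hBx⟩ = y)
    -- the pencil `M(z) = B² − i z R − z² I` with `dom(M(z)) = dom(B²)`:
    (M : ℂ → (H →ₗ.[ℂ] H))
    (hMdom : ∀ z : ℂ, (M z).domain = B2.domain)
    (hMval : ∀ (z : ℂ) (x : (M z).domain) (hx2 : (x : H) ∈ B2.domain)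
      (hxR : (x : H) ∈ R.domain),
      M z x = B2 ⟨(x : H), hx2⟩ - (Complex.I * z) • R ⟨(x : H), hxR⟩ - z ^ 2 • (x : H))
    -- the Dirac-type operator `Q(f,g) = (−iRf + Bg, Bf)`, `dom(Q) = dom(B) ⊕ dom(B)`:
    (Q : WithLp 2 (H × H) →ₗ.[ℂ] WithLp 2 (H × H))
    (hQdom : ∀ x : WithLp 2 (H × H), x ∈ Q.domain ↔
      (x.fst ∈ B.domain ∧ x.snd ∈ B.domain))
    (hQval : ∀ (x : Q.domain) (h1 : (x : WithLp 2 (H × H)).fst ∈ B.domain)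
      (h2 : (x : WithLp 2 (H × H)).snd ∈ B.domain)
      (hR : (x : WithLp 2 (H × H)).fst ∈ R.domain),
      Q x = (WithLp.equiv 2 (H × H)).symm
        (-(Complex.I • R ⟨(x : WithLp 2 (H × H)).fst, hR⟩) + B ⟨(x : WithLp 2 (H × H)).snd, h2⟩,
          B ⟨(x : WithLp 2 (H × H)).fst, h1⟩)) :
    -- `Q` is injective and closed:
    (∀ x : Q.domain, Q x = 0 → (x : WithLp 2 (H × H)) = 0) ∧
    Q.IsClosed ∧
    -- for `z ≠ 0`, bounded invertibility of `Q − zI` and of `M(z)` are equivalent: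
    (∀ z : ℂ, z ≠ 0 → (HasBoundedInverseShifted Q z ↔ HasBoundedInverseShifted (M z) 0)) ∧
    -- if in addition `0 ∈ σ(B²)`, then `σ(Q) ∪ {0} = σ(M(·))`:
    (¬ HasBoundedInverseShifted B2 0 →
      {z : ℂ | ¬ HasBoundedInverseShifted Q z} ∪ {0} =
        {z : ℂ | ¬ HasBoundedInverseShifted (M z) 0}) := by
  classical
  -- B² facts
  have hB2domiff : ∀ x : H, x ∈ B2.domain ↔
      ∃ (hx : x ∈ B.domain), (B ⟨x, hx⟩ : H) ∈ B.domain := by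
    intro x
    constructor
    · intro hx2
      obtain ⟨hx, hBx, -⟩ := (hB2 x (B2 ⟨x, hx2⟩)).mp (B2.mem_graph ⟨x, hx2⟩)
      exact ⟨hx, hBx⟩
    · rintro ⟨hx, hBx⟩
      exact DP_graph_mem_fst B2 ((hB2 x _).mpr ⟨hx, hBx, rfl⟩)
  have hB2val : ∀ (x : H) (hx2 : x ∈ B2.domain) (hx : x ∈ B.domain)
      (hBx : (B ⟨x, hx⟩ : H) ∈ B.domain), B2 ⟨x, hx2⟩ = B ⟨(B ⟨x, hx⟩ : H), hBx⟩ :=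
    fun x hx2 hx hBx =>
      DP_graph_val B2 ((hB2 x _).mpr ⟨hx, hBx, rfl⟩) hx2
  -- graph description of M z
  have hMgraph : ∀ (z : ℂ) (x y : H), (x, y) ∈ (M z).graph ↔
      ∃ (hx : x ∈ B.domain) (hBx : (B ⟨x, hx⟩ : H) ∈ B.domain),
        (B ⟨(B ⟨x, hx⟩ : H), hBx⟩ : H) - (Complex.I * z) • (R ⟨x, hRdom hx⟩ : H)
          - z ^ 2 • x = y := by
    intro z x y
    constructor
    · intro h
      rw [LinearPMap.mem_graph_iff] at h
      obtain ⟨q, hq1, hq2⟩ := h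
      simp only at hq1 hq2
      subst hq1
      have hx2 : (q : H) ∈ B2.domain := (hMdom z) ▸ q.2
      obtain ⟨hx, hBx⟩ := (hB2domiff (q : H)).mp hx2
      refine ⟨hx, hBx, ?_⟩
      rw [← hq2, hMval z q hx2 (hRdom hx), hB2val (q : H) hx2 hx hBx]
    · rintro ⟨hx, hBx, hval⟩
      have hx2 : x ∈ B2.domain := (hB2domiff x).mpr ⟨hx, hBx⟩
      have hxM : x ∈ (M z).domain := (hMdom z) ▸ hx2
      rw [LinearPMap.mem_graph_iff]
      refine ⟨⟨x, hxM⟩, rfl, ?_⟩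
      rw [hMval z ⟨x, hxM⟩ hx2 (hRdom hx), hB2val x hx2 hx hBx]
      exact hval
  -- graph description of Q
  have hQgraph : ∀ (x y : WithLp 2 (H × H)), (x, y) ∈ Q.graph ↔
      ∃ (h1 : x.fst ∈ B.domain) (h2 : x.snd ∈ B.domain),
        y = (WithLp.equiv 2 (H × H)).symm
          (-(Complex.I • (R ⟨x.fst, hRdom h1⟩ : H)) + B ⟨x.snd, h2⟩, B ⟨x.fst, h1⟩) := by
    intro x y
    constructor
    · intro h
      rw [LinearPMap.mem_graph_iff] at h
      obtain ⟨q, hq1, hq2⟩ := h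
      simp only at hq1 hq2
      subst hq1
      obtain ⟨h1, h2⟩ := (hQdom (q : WithLp 2 (H × H))).mp q.2
      exact ⟨h1, h2, by rw [← hq2, hQval q h1 h2 (hRdom h1)]⟩
    · rintro ⟨h1, h2, hval⟩
      have hxQ : x ∈ Q.domain := (hQdom x).mpr ⟨h1, h2⟩
      rw [LinearPMap.mem_graph_iff]
      refine ⟨⟨x, hxQ⟩, rfl, ?_⟩
      rw [hQval ⟨x, hxQ⟩ h1 h2 (hRdom h1)]
      exact hval.symm
  have hBclosed := DP_isClosed B hBdense hBsa
  obtain ⟨a, ha, hrb⟩ := DP_relbound B hBclosed R hRclosable hRdom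
  -- Part 1 : injectivity
  have part1 : ∀ x : Q.domain, Q x = 0 → (x : WithLp 2 (H × H)) = 0 := by
    intro x hx
    have hgr : ((x : WithLp 2 (H × H)), (0 : WithLp 2 (H × H))) ∈ Q.graph := by
      have := Q.mem_graph x
      rwa [hx] at this
    obtain ⟨h1, h2, hval⟩ := (hQgraph _ _).mp hgr
    have hc1 : (0 : H) = -(Complex.I • (R ⟨(x : WithLp 2 (H × H)).fst, hRdom h1⟩ : H))
        + B ⟨(x : WithLp 2 (H × H)).snd, h2⟩ := congrArg WithLp.fst hval
    have hc2 : (0 : H) = B ⟨(x : WithLp 2 (H × H)).fst, h1⟩ := congrArg WithLp.snd hval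
    have hx1 : (x : WithLp 2 (H × H)).fst = 0 := hBker _ hc2.symm
    have hR0 : (R ⟨(x : WithLp 2 (H × H)).fst, hRdom h1⟩ : H) = 0 := by
      have he : (⟨(x : WithLp 2 (H × H)).fst, hRdom h1⟩ : R.domain) = 0 :=
        Subtype.ext hx1
      rw [he]
      exact R.toFun.map_zero
    have hx2 : (x : WithLp 2 (H × H)).snd = 0 := by
      have hB2' : B ⟨(x : WithLp 2 (H × H)).snd, h2⟩ = 0 := by
        rw [hR0] at hc1
        simpa using hc1.symm
      exact hBker ⟨(x : WithLp 2 (H × H)).snd, h2⟩ hB2'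
    exact (WithLp.ext_iff _).2 (Prod.ext hx1 hx2)
  -- Part 2 : closedness
  have part2 : Q.IsClosed := by
    show IsClosed (Q.graph : Set (WithLp 2 (H × H) × WithLp 2 (H × H)))
    apply IsSeqClosed.isClosed
    rintro s p hs hsp
    simp only [SetLike.mem_coe] at hs ⊢
    have hmem := fun n => (hQgraph (s n).1 (s n).2).mp (hs n)
    set e2 := WithLp.prodContinuousLinearEquiv 2 ℂ H H with he2
    have c1 : Continuous (fun q : WithLp 2 (H × H) × WithLp 2 (H × H) => (e2 q.1).fst) :=
      (e2.continuous.comp continuous_fst).fst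
    have c2 : Continuous (fun q : WithLp 2 (H × H) × WithLp 2 (H × H) => (e2 q.1).snd) :=
      (e2.continuous.comp continuous_fst).snd
    have c3 : Continuous (fun q : WithLp 2 (H × H) × WithLp 2 (H × H) => (e2 q.2).fst) :=
      (e2.continuous.comp continuous_snd).fst
    have c4 : Continuous (fun q : WithLp 2 (H × H) × WithLp 2 (H × H) => (e2 q.2).snd) :=
      (e2.continuous.comp continuous_snd).snd
    have t1 : Filter.Tendsto (fun n => (s n).1.fst) Filter.atTop (nhds p.1.fst) :=
      (c1.tendsto p).comp hsp
    have t2 : Filter.Tendsto (fun n => (s n).1.snd) Filter.atTop (nhds p.1.snd) :=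
      (c2.tendsto p).comp hsp
    have t3 : Filter.Tendsto (fun n => (s n).2.fst) Filter.atTop (nhds p.2.fst) :=
      (c3.tendsto p).comp hsp
    have t4 : Filter.Tendsto (fun n => (s n).2.snd) Filter.atTop (nhds p.2.snd) :=
      (c4.tendsto p).comp hsp
    set fn : ℕ → B.domain := fun n => ⟨(s n).1.fst, (hmem n).choose⟩ with hfn
    set gn : ℕ → B.domain := fun n => ⟨(s n).1.snd, (hmem n).choose_spec.choose⟩ with hgn
    have hvaln := fun n => (hmem n).choose_spec.choose_spec
    have hu : ∀ n, (s n).2.fst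
        = -(Complex.I • (R ⟨(s n).1.fst, hRdom (fn n).2⟩ : H)) + B (gn n) :=
      fun n => congrArg WithLp.fst (hvaln n)
    have hv : ∀ n, (s n).2.snd = B (fn n) := fun n => congrArg WithLp.snd (hvaln n)
    -- f-limit in the graph of B
    have hBf : ((p.1.fst, p.2.snd) : H × H) ∈ B.graph := by
      refine hBclosed.mem_of_tendsto (t1.prodMk_nhds t4) (Filter.Eventually.of_forall fun n => ?_)
      have := B.mem_graph (fn n)
      rwa [← hv n] at this
    have hpf : p.1.fst ∈ B.domain := DP_graph_mem_fst B hBf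
    have hBpf : B ⟨p.1.fst, hpf⟩ = p.2.snd := DP_graph_val B hBf hpf
    -- R-limit
    have hRt : Filter.Tendsto (fun n => (R ⟨((fn n : H)), hRdom (fn n).2⟩ : H)) Filter.atTop
        (nhds (R ⟨p.1.fst, hRdom hpf⟩)) := by
      refine DP_Rtends B R hRclosable hRdom a ha hrb (hRdom hpf) t1 ?_
      have heq : (fun n => (B (fn n) : H)) = fun n => (s n).2.snd := funext fun n => (hv n).symm
      rw [heq]
      exact t4.cauchySeq
    -- g-limit in the graph of B
    have hBg : ((p.1.snd, p.2.fst + Complex.I • (R ⟨p.1.fst, hRdom hpf⟩ : H)) : H × H)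
        ∈ B.graph := by
      refine hBclosed.mem_of_tendsto
        (t2.prodMk_nhds (t3.add (hRt.const_smul Complex.I)))
        (Filter.Eventually.of_forall fun n => ?_)
      have hBgn : (B (gn n) : H)
          = (s n).2.fst + Complex.I • (R ⟨((fn n : H)), hRdom (fn n).2⟩ : H) := by
        rw [hu n]
        abel
      have := B.mem_graph (gn n)
      rwa [hBgn] at this
    have hpg : p.1.snd ∈ B.domain := DP_graph_mem_fst B hBg
    have hBpg : B ⟨p.1.snd, hpg⟩ = p.2.fst + Complex.I • (R ⟨p.1.fst, hRdom hpf⟩ : H) :=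
      DP_graph_val B hBg hpg
    rw [show p = (p.1, p.2) from rfl]
    refine (hQgraph p.1 p.2).mpr ⟨hpf, hpg, ?_⟩
    refine (WithLp.ext_iff _).2 (Prod.ext ?_ ?_)
    · show p.2.fst = -(Complex.I • (R ⟨p.1.fst, hRdom hpf⟩ : H)) + B ⟨p.1.snd, hpg⟩
      rw [hBpg]
      abel
    · show p.2.snd = B ⟨p.1.fst, hpf⟩
      exact hBpf.symm
  have part3 : ∀ z : ℂ, z ≠ 0 →
      (HasBoundedInverseShifted Q z ↔ HasBoundedInverseShifted (M z) 0) := by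
    intro z hz
    set e2 := WithLp.prodContinuousLinearEquiv 2 ℂ H H with he2
    set ιL : H →L[ℂ] WithLp 2 (H × H) :=
      e2.symm.toContinuousLinearMap.comp (ContinuousLinearMap.inl ℂ H H) with hιL
    set πL : WithLp 2 (H × H) →L[ℂ] H :=
      (ContinuousLinearMap.fst ℂ H H).comp e2.toContinuousLinearMap with hπL
    constructor
    · rintro ⟨S, hSr, hSl⟩
      refine ⟨(πL.comp (S.comp ιL)).comp (z⁻¹ • ContinuousLinearMap.id ℂ H), ?_, ?_⟩
      · intro u
        set w : WithLp 2 (H × H) := ιL (z⁻¹ • u) with hw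
        obtain ⟨h1, h2, hval⟩ := (hQgraph (S w) _).mp (hSr w)
        set f := (S w).fst with hf
        set g := (S w).snd with hg
        have hc1 : (z⁻¹ • u) + z • f
            = -(Complex.I • (R ⟨f, hRdom h1⟩ : H)) + B ⟨g, h2⟩ := congrArg WithLp.fst hval
        have hc2 : (0 : H) + z • g = B ⟨f, h1⟩ := congrArg WithLp.snd hval
        have hBf : B ⟨f, h1⟩ = z • g := by rw [← hc2, zero_add]
        have hBfdom : (B ⟨f, h1⟩ : H) ∈ B.domain := by
          rw [hBf]; exact B.domain.smul_mem z h2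
        have hBg : B ⟨g, h2⟩ = z⁻¹ • u + z • f + Complex.I • (R ⟨f, hRdom h1⟩ : H) := by
          rw [hc1]; abel
        show ((f : H), u + (0:ℂ) • f) ∈ (M z).graph
        rw [zero_smul, add_zero]
        refine (hMgraph z f u).mpr ⟨h1, hBfdom, ?_⟩
        have hsub : (⟨(B ⟨f, h1⟩ : H), hBfdom⟩ : B.domain) = z • (⟨g, h2⟩ : B.domain) :=
          Subtype.ext hBf
        rw [hsub, LinearPMap.map_smul, hBg]
        match_scalars <;> field_simp <;> ring
      · intro x y hxy
        rw [zero_smul, sub_zero]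
        obtain ⟨hx, hBx, hval⟩ := (hMgraph z x y).mp hxy
        have hsnd : z⁻¹ • (B ⟨x, hx⟩ : H) ∈ B.domain := B.domain.smul_mem z⁻¹ hBx
        set pq : WithLp 2 (H × H) :=
          (WithLp.equiv 2 (H × H)).symm (x, z⁻¹ • (B ⟨x, hx⟩ : H)) with hpq
        have hpmem : pq ∈ Q.domain := (hQdom pq).mpr ⟨hx, hsnd⟩
        have happ := hSl pq (Q ⟨pq, hpmem⟩) (Q.mem_graph ⟨pq, hpmem⟩)
        have hQpq : Q ⟨pq, hpmem⟩ = (WithLp.equiv 2 (H × H)).symm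
            (-(Complex.I • (R ⟨x, hRdom hx⟩ : H))
              + z⁻¹ • (B ⟨(B ⟨x, hx⟩ : H), hBx⟩ : H), (B ⟨x, hx⟩ : H)) := by
          rw [hQval ⟨pq, hpmem⟩ hx hsnd (hRdom hx)]
          refine congrArg (WithLp.equiv 2 (H × H)).symm ?_
          refine Prod.ext ?_ rfl
          show -(Complex.I • (R ⟨x, hRdom hx⟩ : H)) + (B ⟨z⁻¹ • (B ⟨x, hx⟩ : H), hsnd⟩ : H)
              = -(Complex.I • (R ⟨x, hRdom hx⟩ : H)) + z⁻¹ • (B ⟨(B ⟨x, hx⟩ : H), hBx⟩ : H)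
          have hsm : (⟨z⁻¹ • (B ⟨x, hx⟩ : H), hsnd⟩ : B.domain)
              = z⁻¹ • (⟨(B ⟨x, hx⟩ : H), hBx⟩ : B.domain) := Subtype.ext rfl
          rw [hsm, LinearPMap.map_smul]
        have harg : Q ⟨pq, hpmem⟩ - z • pq = ιL (z⁻¹ • y) := by
          rw [hQpq]
          refine (WithLp.ext_iff _).2 (Prod.ext ?_ ?_)
          · show (-(Complex.I • (R ⟨x, hRdom hx⟩ : H))
                + z⁻¹ • (B ⟨(B ⟨x, hx⟩ : H), hBx⟩ : H)) - z • x = z⁻¹ • y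
            rw [← hval]
            match_scalars <;> field_simp <;> ring
          · show (B ⟨x, hx⟩ : H) - z • (z⁻¹ • (B ⟨x, hx⟩ : H)) = 0
            match_scalars <;> field_simp <;> ring
        have hSfin : S (ιL (z⁻¹ • y)) = pq := by rw [← harg]; exact happ
        show πL (S (ιL ((z⁻¹ • ContinuousLinearMap.id ℂ H) y))) = x
        have hid : (z⁻¹ • ContinuousLinearMap.id ℂ H) y = z⁻¹ • y := rfl
        rw [hid, hSfin]
        rfl
    · rintro ⟨T, hTr, hTl⟩
      have hT1 : ∀ w : H, ∃ (h1 : T w ∈ B.domain) (h2 : (B ⟨T w, h1⟩ : H) ∈ B.domain),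
          (B ⟨(B ⟨T w, h1⟩ : H), h2⟩ : H) - (Complex.I * z) • (R ⟨T w, hRdom h1⟩ : H)
            - z ^ 2 • T w = w := by
        intro w
        have h := hTr w
        rw [zero_smul, add_zero] at h
        exact (hMgraph z (T w) w).mp h
      have hT2 : ∀ (x : H) (hx : x ∈ B.domain) (hBx : (B ⟨x, hx⟩ : H) ∈ B.domain),
          T ((B ⟨(B ⟨x, hx⟩ : H), hBx⟩ : H) - (Complex.I * z) • (R ⟨x, hRdom hx⟩ : H)
            - z ^ 2 • x) = x := by
        intro x hx hBx
        have hmem : (x, (B ⟨(B ⟨x, hx⟩ : H), hBx⟩ : H)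
            - (Complex.I * z) • (R ⟨x, hRdom hx⟩ : H) - z ^ 2 • x) ∈ (M z).graph :=
          (hMgraph z x _).mpr ⟨hx, hBx, rfl⟩
        have h := hTl x _ hmem
        rwa [zero_smul, sub_zero] at h
      obtain ⟨C, D, E, hEspec, hCD⟩ :=
        DP_core B hBdense hBsa R hRclosable hRdom a ha hrb z T hT1 hT2
      set SQ : WithLp 2 (H × H) →L[ℂ] WithLp 2 (H × H) :=
        e2.symm.toContinuousLinearMap.comp
          ((((z • T).coprod C).prod (E.coprod
            (z⁻¹ • (D - ContinuousLinearMap.id ℂ H)))).comp e2.toContinuousLinearMap) with hSQ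
      have rightInv : ∀ w, (SQ w, w + z • SQ w) ∈ Q.graph := by
        intro w
        obtain ⟨h1w, h2w, hT1w⟩ := hT1 w.fst
        obtain ⟨hCw, hDw, hBCw, hBDw⟩ := hCD w.snd
        obtain ⟨h1E, hEw⟩ := hEspec w.fst
        have hEdom : E w.fst ∈ B.domain := by rw [hEw]; exact h2w
        have hf : (SQ w).fst ∈ B.domain := by
          show z • T w.fst + C w.snd ∈ B.domain
          exact add_mem (B.domain.smul_mem z h1w) hCw
        have hg : (SQ w).snd ∈ B.domain := by
          show E w.fst + z⁻¹ • (D w.snd - w.snd) ∈ B.domain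
          exact add_mem hEdom (B.domain.smul_mem z⁻¹ hDw)
        refine (hQgraph (SQ w) (w + z • SQ w)).mpr ⟨hf, hg, ?_⟩
        have hBBT : (B ⟨(B ⟨T w.fst, h1w⟩ : H), h2w⟩ : H)
            = w.fst + (Complex.I * z) • (R ⟨T w.fst, hRdom h1w⟩ : H) + z ^ 2 • T w.fst := by
          have e2' : (B ⟨(B ⟨T w.fst, h1w⟩ : H), h2w⟩ : H)
              - ((Complex.I * z) • (R ⟨T w.fst, hRdom h1w⟩ : H) + z ^ 2 • T w.fst) = w.fst := by
            rw [← sub_sub]; exact hT1w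
          have e3 := eq_add_of_sub_eq e2'
          rw [e3]; abel
        refine (WithLp.ext_iff _).2 (Prod.ext ?_ ?_)
        · show w.fst + z • (z • T w.fst + C w.snd)
              = -(Complex.I • (R ⟨z • T w.fst + C w.snd, hRdom hf⟩ : H))
                + (B ⟨E w.fst + z⁻¹ • (D w.snd - w.snd), hg⟩ : H)
          have hgsub : (⟨E w.fst + z⁻¹ • (D w.snd - w.snd), hg⟩ : B.domain)
              = (⟨E w.fst, hEdom⟩ : B.domain)
                + z⁻¹ • (⟨D w.snd - w.snd, hDw⟩ : B.domain) := Subtype.ext rfl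
          have hEsub : (⟨E w.fst, hEdom⟩ : B.domain) = ⟨(B ⟨T w.fst, h1w⟩ : H), h2w⟩ :=
            Subtype.ext hEw
          have hRsub : (⟨z • T w.fst + C w.snd, hRdom hf⟩ : R.domain)
              = z • (⟨T w.fst, hRdom h1w⟩ : R.domain) + (⟨C w.snd, hRdom hCw⟩ : R.domain) :=
            Subtype.ext rfl
          rw [hgsub, LinearPMap.map_add, LinearPMap.map_smul, hEsub, hBBT, hBDw,
            hRsub, LinearPMap.map_add, LinearPMap.map_smul]
          match_scalars <;> field_simp <;> ring
        · show w.snd + z • (E w.fst + z⁻¹ • (D w.snd - w.snd))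
              = (B ⟨z • T w.fst + C w.snd, hf⟩ : H)
          have hfsub : (⟨z • T w.fst + C w.snd, hf⟩ : B.domain)
              = z • (⟨T w.fst, h1w⟩ : B.domain) + (⟨C w.snd, hCw⟩ : B.domain) :=
            Subtype.ext rfl
          rw [hfsub, LinearPMap.map_add, LinearPMap.map_smul, hBCw, ← hEw]
          match_scalars <;> field_simp <;> ring
      refine ⟨SQ, rightInv, ?_⟩
      intro x y hxy
      set w' := y - z • x with hw'
      have hr := rightInv w'
      have hdgr : ((SQ w' - x, z • (SQ w' - x)) :
          WithLp 2 (H × H) × WithLp 2 (H × H)) ∈ Q.graph := by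
        have h0 := sub_mem hr hxy
        have hpr : ((SQ w', w' + z • SQ w') - (x, y) :
            WithLp 2 (H × H) × WithLp 2 (H × H)) = (SQ w' - x, z • (SQ w' - x)) := by
          refine Prod.ext rfl ?_
          show (w' + z • SQ w') - y = z • (SQ w' - x)
          rw [hw', smul_sub]
          abel
        rwa [hpr] at h0
      set d := SQ w' - x with hd
      obtain ⟨hd1, hd2, hdval⟩ := (hQgraph d (z • d)).mp hdgr
      have hdc1 : z • d.fst = -(Complex.I • (R ⟨d.fst, hRdom hd1⟩ : H)) + (B ⟨d.snd, hd2⟩ : H) :=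
        congrArg WithLp.fst hdval
      have hdc2 : z • d.snd = (B ⟨d.fst, hd1⟩ : H) := congrArg WithLp.snd hdval
      have hBd1dom : (B ⟨d.fst, hd1⟩ : H) ∈ B.domain := by
        rw [← hdc2]; exact B.domain.smul_mem z hd2
      have hM0 : (B ⟨(B ⟨d.fst, hd1⟩ : H), hBd1dom⟩ : H)
          - (Complex.I * z) • (R ⟨d.fst, hRdom hd1⟩ : H) - z ^ 2 • d.fst = 0 := by
        have hsub2 : (⟨(B ⟨d.fst, hd1⟩ : H), hBd1dom⟩ : B.domain)
            = z • (⟨d.snd, hd2⟩ : B.domain) := Subtype.ext hdc2.symm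
        have hBd2 : (B ⟨d.snd, hd2⟩ : H)
            = z • d.fst + Complex.I • (R ⟨d.fst, hRdom hd1⟩ : H) := by
          rw [hdc1]; abel
        rw [hsub2, LinearPMap.map_smul, hBd2]
        match_scalars <;> field_simp <;> ring
      have hTd := hT2 d.fst hd1 hBd1dom
      rw [hM0, map_zero] at hTd
      have hd1z : d.fst = 0 := hTd.symm
      have hd2z : d.snd = 0 := by
        have hz0 : (⟨d.fst, hd1⟩ : B.domain) = 0 := Subtype.ext hd1z
        rw [hz0] at hdc2
        have hB0 : (B (0 : B.domain) : H) = 0 := B.toFun.map_zero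
        rw [hB0] at hdc2
        rcases smul_eq_zero.mp hdc2 with h | h
        · exact absurd h hz
        · exact h
      have hdz : d = 0 := (WithLp.ext_iff _).2 (Prod.ext hd1z hd2z)
      exact sub_eq_zero.mp hdz
  refine ⟨part1, part2, part3, ?_⟩
  intro hB2inv
  have hgr_eq : (M 0).graph = B2.graph := by
    ext p
    obtain ⟨x, y⟩ := p
    rw [hMgraph 0 x y, hB2 x y]
    constructor
    · rintro ⟨hx, hBx, hval⟩
      exact ⟨hx, hBx, by simpa using hval⟩
    · rintro ⟨hx, hBx, hval⟩
      exact ⟨hx, hBx, by simpa using hval⟩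
  have hM0 : ¬ HasBoundedInverseShifted (M 0) 0 := by
    rintro ⟨S, h1, h2⟩
    refine hB2inv ⟨S, fun w => ?_, fun x y hxy => ?_⟩
    · have := h1 w
      rwa [hgr_eq] at this
    · refine h2 x y ?_
      rwa [← hgr_eq] at hxy
  ext z
  simp only [Set.mem_union, Set.mem_setOf_eq, Set.mem_singleton_iff]
  by_cases hz : z = 0
  · subst hz
    simp [hM0]
  · rw [part3 z hz]
    simp [hz]
end

section
/- If R is accretive, i.e., Re⟨f, Rf⟩ ≥ 0 for all f ∈ dom(R), then for every λ > 0 the operator M(iλ) = B² + λ R + λ² I, with domain dom(B²), has an everywhere defined bounded inverse on H. -/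
set_option maxHeartbeats 4000000
set_option synthInstance.maxHeartbeats 400000
set_option linter.unusedVariables false


open scoped InnerProductSpace

section Aux

variable {E : Type*} [NormedAddCommGroup E] [InnerProductSpace ℂ E]

lemma graph_determined (g : E →ₗ.[ℂ] E) {x y y' : E}
    (h : (x, y) ∈ g.graph) (h' : (x, y') ∈ g.graph) : y = y' := by
  rw [LinearPMap.mem_graph_iff] at h h'
  obtain ⟨a, ha, ha2⟩ := h
  obtain ⟨b, hb, hb2⟩ := h'
  have hab : a = b := Subtype.ext (ha.trans hb.symm)
  exact ha2.symm.trans ((congrArg _ hab).trans hb2)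

lemma closable_eval {g : E →ₗ.[ℂ] E} (hg : g.IsClosable) {x y : E}
    (hmem : (x, y) ∈ closure (g.graph : Set (E × E))) (hx : x ∈ g.domain) :
    y = g ⟨x, hx⟩ := by
  have h1 : (x, y) ∈ g.closure.graph := by
    rw [← hg.graph_closure_eq_closure_graph]
    rwa [← SetLike.mem_coe, Submodule.topologicalClosure_coe]
  have h2 : (x, g.closure ⟨x, g.le_closure.1 hx⟩) ∈ g.closure.graph :=
    g.closure.mem_graph ⟨x, g.le_closure.1 hx⟩
  have h3 : g.closure ⟨x, g.le_closure.1 hx⟩ = g ⟨x, hx⟩ := (g.le_closure.2 rfl).symm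
  rw [← h3]
  exact graph_determined _ h1 h2

lemma adjoint_graph_isClosed [CompleteSpace E] (T : E →ₗ.[ℂ] E)
    (hT : Dense (T.domain : Set E)) :
    IsClosed (T.adjoint.graph : Set (E × E)) := by
  have hset : (T.adjoint.graph : Set (E × E)) =
      ⋂ w : T.domain, {p : E × E | ⟪p.2, (w : E)⟫_ℂ = ⟪p.1, T w⟫_ℂ} := by
    ext ⟨y, x⟩
    simp only [SetLike.mem_coe, Set.mem_iInter, Set.mem_setOf_eq]
    constructor
    · intro h w
      rw [LinearPMap.mem_graph_iff] at h
      obtain ⟨y', hy', hxy⟩ := h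
      have hfa := LinearPMap.adjoint_isFormalAdjoint hT y' w
      rw [hxy, hy'] at hfa
      exact hfa
    · intro h
      have hmem : y ∈ T.adjoint.domain :=
        LinearPMap.mem_adjoint_domain_of_exists y ⟨x, fun w => h w⟩
      have hval := LinearPMap.adjoint_apply_eq hT ⟨y, hmem⟩ (fun w => h w)
      exact (LinearPMap.mem_graph_iff _).mpr ⟨⟨y, hmem⟩, rfl, hval⟩
  rw [hset]
  refine isClosed_iInter fun w => isClosed_eq ?_ ?_
  · exact Continuous.inner continuous_snd continuous_const
  · exact Continuous.inner continuous_fst continuous_const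

end Aux

/-- from the proof of Theorem 5.3. Let `B` be self-adjoint in `H` with
`ker(B) = {0}` and `R` densely defined closable with `dom(R) ∩ dom(R*) ⊇ dom(B)`.
If `R` is accretive, i.e. `Re⟪f, Rf⟫ ≥ 0` for all `f ∈ dom(R)`, then for every `λ > 0` the
operator `M(iλ) = B² + λR + λ²I`, with domain `dom(B²)`, has an everywhere defined bounded
inverse on `H`. -/
theorem pencil_invertible_on_positive_imaginary_axis
    {H : Type*}
    [NormedAddCommGroup H] [InnerProductSpace ℂ H] [CompleteSpace H]
    [TopologicalSpace.SeparableSpace H]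
    (B : H →ₗ.[ℂ] H)
    (hBdense : Dense (B.domain : Set H))
    (hBsa : B.adjoint = B)
    (hBker : ∀ f : B.domain, B f = 0 → (f : H) = 0)
    (R : H →ₗ.[ℂ] H)
    (hRdense : Dense (R.domain : Set H))
    (hRclosable : R.IsClosable)
    (hRdom : B.domain ≤ R.domain)
    (hRstardom : B.domain ≤ R.adjoint.domain)
    -- `B² = B ∘ B` with its natural domain:
    (B2 : H →ₗ.[ℂ] H)
    (hB2 : ∀ (x y : H), (x, y) ∈ B2.graph ↔
      ∃ (hx : x ∈ B.domain) (hBx : B ⟨x, hx⟩ ∈ B.domain), B ⟨B ⟨x, hx⟩, hBx⟩ = y)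
    -- the pencil `M(z) = B² − i z R − z² I` (so `M(iλ) = B² + λR + λ²I`) on `dom(B²)`:
    (M : ℂ → (H →ₗ.[ℂ] H))
    (hMdom : ∀ z : ℂ, (M z).domain = B2.domain)
    (hMval : ∀ (z : ℂ) (x : (M z).domain) (hx2 : (x : H) ∈ B2.domain)
      (hxR : (x : H) ∈ R.domain),
      M z x = B2 ⟨(x : H), hx2⟩ - (Complex.I * z) • R ⟨(x : H), hxR⟩ - z ^ 2 • (x : H))
    -- `R` is accretive:
    (haccretive : ∀ f : R.domain, 0 ≤ (⟪(f : H), R f⟫_ℂ).re) :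
    ∀ l : ℝ, 0 < l → HasBoundedInverseShifted (M (Complex.I * (l : ℂ))) 0 := by
  intro l hl
  set z : ℂ := Complex.I * (l : ℂ) with hzdef
  -- basic adjoint transfer facts
  have hadj_dom : B.adjoint.domain = B.domain := by rw [hBsa]
  have hadj_to_B : ∀ (x : H) (h1 : x ∈ B.adjoint.domain) (h2 : x ∈ B.domain),
      B ⟨x, h2⟩ = B.adjoint ⟨x, h1⟩ := by
    rw [hBsa]; intro x h1 h2; rfl
  have hsym : ∀ f g : B.domain, ⟪(B f : H), (g : H)⟫_ℂ = ⟪(f : H), B g⟫_ℂ := by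
    intro f g
    have hf' : (f : H) ∈ B.adjoint.domain := hadj_dom.symm ▸ f.2
    have hfa := LinearPMap.adjoint_isFormalAdjoint hBdense ⟨(f : H), hf'⟩ g
    rw [← hadj_to_B (f : H) hf' f.2] at hfa
    exact hfa
  have hBclosed : IsClosed (B.graph : Set (H × H)) := by
    have h := adjoint_graph_isClosed B hBdense
    rwa [hBsa] at h
  -- the graph of B as a Hilbert space
  set Vs : Submodule ℂ (WithLp 2 (H × H)) :=
    B.graph.comap (WithLp.linearEquiv 2 ℂ (H × H)).toLinearMap with hVsdef
  have hVclosed : IsClosed (Vs : Set (WithLp 2 (H × H))) := by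
    have heq : (Vs : Set (WithLp 2 (H × H))) =
        (WithLp.prodContinuousLinearEquiv 2 ℂ H H) ⁻¹' (B.graph : Set (H × H)) := rfl
    rw [heq]
    exact hBclosed.preimage (WithLp.prodContinuousLinearEquiv 2 ℂ H H).continuous
  haveI : CompleteSpace Vs := hVclosed.completeSpace_coe
  set prL : WithLp 2 (H × H) →L[ℂ] H × H :=
    (WithLp.prodContinuousLinearEquiv 2 ℂ H H).toContinuousLinearMap with hprLdef
  set pi1 : Vs →L[ℂ] H := (ContinuousLinearMap.fst ℂ H H).comp (prL.comp Vs.subtypeL) with hpi1def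
  set pi2 : Vs →L[ℂ] H := (ContinuousLinearMap.snd ℂ H H).comp (prL.comp Vs.subtypeL) with hpi2def
  have hgraph : ∀ v : Vs, (pi1 v, pi2 v) ∈ B.graph := fun v => v.2
  have hdom1 : ∀ v : Vs, pi1 v ∈ B.domain := fun v =>
    LinearPMap.mem_domain_of_mem_graph (hgraph v)
  have hBpi : ∀ v : Vs, B ⟨pi1 v, hdom1 v⟩ = pi2 v := by
    intro v
    have h := hgraph v
    rw [LinearPMap.mem_graph_iff] at h
    obtain ⟨a, ha, hb⟩ := h
    have : (⟨pi1 v, hdom1 v⟩ : B.domain) = a := Subtype.ext ha.symm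
    rw [this]; exact hb
  have hdomR : ∀ v : Vs, pi1 v ∈ R.domain := fun v => hRdom (hdom1 v)
  -- the embedding of B.domain into Vs
  have hemb : ∀ f : B.domain, ∃ v : Vs, pi1 v = (f : H) ∧ pi2 v = B f := by
    intro f
    refine ⟨⟨(WithLp.equiv 2 (H × H)).symm ((f : H), B f), ?_⟩, rfl, rfl⟩
    exact B.mem_graph f
  -- the "R" map on Vs, continuous by the closed graph theorem
  have hrho0add : ∀ v w : Vs,
      R ⟨pi1 (v + w), hdomR (v + w)⟩ = R ⟨pi1 v, hdomR v⟩ + R ⟨pi1 w, hdomR w⟩ := by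
    intro v w
    have h : (⟨pi1 (v + w), hdomR (v + w)⟩ : R.domain)
        = ⟨pi1 v, hdomR v⟩ + ⟨pi1 w, hdomR w⟩ := Subtype.ext (by simp)
    rw [h, R.map_add]
  have hrho0smul : ∀ (a : ℂ) (v : Vs),
      R ⟨pi1 (a • v), hdomR (a • v)⟩ = a • R ⟨pi1 v, hdomR v⟩ := by
    intro a v
    have h : (⟨pi1 (a • v), hdomR (a • v)⟩ : R.domain) = a • ⟨pi1 v, hdomR v⟩ :=
      Subtype.ext (by simp)
    rw [h, R.map_smul]
  set rho0 : Vs →ₗ[ℂ] H :=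
    { toFun := fun v => R ⟨pi1 v, hdomR v⟩
      map_add' := hrho0add
      map_smul' := hrho0smul } with hrho0def
  have hGclosed : IsClosed (LinearMap.graph rho0 : Set (Vs × H)) := by
    apply IsSeqClosed.isClosed
    intro seq p hseq hlim
    have hcont : Continuous (fun q : Vs × H => ((pi1 q.1 : H), q.2)) :=
      (pi1.continuous.comp continuous_fst).prodMk continuous_snd
    have hf : Filter.Tendsto (fun n => ((pi1 (seq n).1 : H), (seq n).2)) Filter.atTop
        (nhds ((pi1 p.1 : H), p.2)) := (hcont.tendsto p).comp hlim
    have hev : ∀ n, ((pi1 (seq n).1 : H), (seq n).2) ∈ (R.graph : Set (H × H)) := by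
      intro n
      have h := hseq n
      rw [SetLike.mem_coe, LinearMap.mem_graph_iff] at h
      rw [h]
      exact R.mem_graph ⟨pi1 (seq n).1, hdomR (seq n).1⟩
    have hmemc : (pi1 p.1, p.2) ∈ closure (R.graph : Set (H × H)) :=
      mem_closure_of_tendsto hf (Filter.Eventually.of_forall hev)
    have hfin := closable_eval hRclosable hmemc (hdomR p.1)
    simp only [SetLike.mem_coe, LinearMap.mem_graph_iff]
    exact hfin
  have hrhocont : Continuous rho0 := rho0.continuous_of_isClosed_graph hGclosed
  set rho : Vs →L[ℂ] H := ⟨rho0, hrhocont⟩ with hrhodef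
  -- the Lax-Milgram operator
  set Lop : Vs →L[ℂ] Vs :=
    (ContinuousLinearMap.adjoint pi2).comp pi2
      + (l : ℂ) • (ContinuousLinearMap.adjoint pi1).comp rho
      + ((l : ℂ) ^ 2) • (ContinuousLinearMap.adjoint pi1).comp pi1 with hLopdef
  have hLinner : ∀ v w : Vs, ⟪w, Lop v⟫_ℂ =
      ⟪pi2 w, pi2 v⟫_ℂ + (l : ℂ) * ⟪pi1 w, rho v⟫_ℂ + (l : ℂ) ^ 2 * ⟪pi1 w, pi1 v⟫_ℂ := by
    intro v w
    simp only [hLopdef, ContinuousLinearMap.add_apply, ContinuousLinearMap.smul_apply,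
      ContinuousLinearMap.comp_apply, inner_add_right, inner_smul_right,
      ContinuousLinearMap.adjoint_inner_right]
    rw [inner_smul_right (E := Vs), inner_smul_right (E := Vs),
      ContinuousLinearMap.adjoint_inner_right, ContinuousLinearMap.adjoint_inner_right]
  have hnsq : ∀ x : H, (⟪x, x⟫_ℂ).re = ‖x‖ ^ 2 := fun x => inner_self_eq_norm_sq (𝕜 := ℂ) x
  have hnormVs : ∀ v : Vs, ‖v‖ ^ 2 = ‖pi1 v‖ ^ 2 + ‖pi2 v‖ ^ 2 := by
    intro v
    have h1 : ⟪v, v⟫_ℂ = ⟪pi1 v, pi1 v⟫_ℂ + ⟪pi2 v, pi2 v⟫_ℂ := rfl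
    have h2 : (⟪v, v⟫_ℂ).re = (⟪pi1 v, pi1 v⟫_ℂ).re + (⟪pi2 v, pi2 v⟫_ℂ).re := by
      rw [h1, Complex.add_re]
    have h3 : (⟪v, v⟫_ℂ).re = ‖v‖ ^ 2 := inner_self_eq_norm_sq (𝕜 := ℂ) v
    rw [← h3, h2, hnsq, hnsq]
  set c : ℝ := min 1 (l ^ 2) with hcdef
  have hcpos : 0 < c := lt_min one_pos (pow_pos hl 2)
  have hrho_acc : ∀ v : Vs, 0 ≤ (⟪pi1 v, rho v⟫_ℂ).re := fun v =>
    haccretive ⟨pi1 v, hdomR v⟩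
  have hcoer : ∀ v : Vs, c * ‖v‖ ^ 2 ≤ (⟪v, Lop v⟫_ℂ).re := by
    intro v
    have hre : (⟪v, Lop v⟫_ℂ).re
        = ‖pi2 v‖ ^ 2 + l * (⟪pi1 v, rho v⟫_ℂ).re + l ^ 2 * ‖pi1 v‖ ^ 2 := by
      rw [hLinner v v]
      have e1 : ((l : ℂ) * ⟪pi1 v, rho v⟫_ℂ).re = l * (⟪pi1 v, rho v⟫_ℂ).re :=
        Complex.re_ofReal_mul _ _
      have e2 : ((l : ℂ) ^ 2 * ⟪pi1 v, pi1 v⟫_ℂ).re = l ^ 2 * (⟪pi1 v, pi1 v⟫_ℂ).re := by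
        rw [← Complex.ofReal_pow]; exact Complex.re_ofReal_mul _ _
      rw [Complex.add_re, Complex.add_re, e1, e2, hnsq, hnsq]
    rw [hre, hnormVs v]
    have hacc := hrho_acc v
    have hc1 : c ≤ 1 := min_le_left _ _
    have hc2 : c ≤ l ^ 2 := min_le_right _ _
    have hp1 : (0 : ℝ) ≤ ‖pi1 v‖ ^ 2 := sq_nonneg _
    have hp2 : (0 : ℝ) ≤ ‖pi2 v‖ ^ 2 := sq_nonneg _
    nlinarith [mul_le_mul_of_nonneg_right hc2 hp1, mul_le_mul_of_nonneg_right hc1 hp2,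
      mul_nonneg hl.le hacc]
  have hLlow : ∀ v : Vs, c * ‖v‖ ≤ ‖Lop v‖ := by
    intro v
    have h1 : (⟪v, Lop v⟫_ℂ).re ≤ ‖v‖ * ‖Lop v‖ := by
      calc (⟪v, Lop v⟫_ℂ).re ≤ ‖(⟪v, Lop v⟫_ℂ)‖ := Complex.re_le_norm _
        _ = ‖(⟪v, Lop v⟫_ℂ)‖ := rfl
        _ ≤ ‖v‖ * ‖Lop v‖ := norm_inner_le_norm (𝕜 := ℂ) (E := Vs) _ _
    have h2 := (hcoer v).trans h1
    rcases eq_or_lt_of_le (norm_nonneg v) with h0 | h0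
    · rw [← h0, mul_zero]; exact norm_nonneg _
    · have h3 : (c * ‖v‖) * ‖v‖ ≤ ‖Lop v‖ * ‖v‖ := by
        calc (c * ‖v‖) * ‖v‖ = c * ‖v‖ ^ 2 := by ring
          _ ≤ ‖v‖ * ‖Lop v‖ := h2
          _ = ‖Lop v‖ * ‖v‖ := by ring
      exact le_of_mul_le_mul_right h3 h0
  have hLsurj : Function.Surjective Lop := by
    have hanti : AntilipschitzWith ⟨c⁻¹, inv_nonneg.mpr hcpos.le⟩ Lop := by
      apply Lop.antilipschitz_of_bound
      intro v
      have h := hLlow v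
      have hinv : (0 : ℝ) ≤ c⁻¹ := inv_nonneg.mpr hcpos.le
      calc ‖v‖ = c⁻¹ * (c * ‖v‖) := by
            rw [← mul_assoc, inv_mul_cancel₀ hcpos.ne', one_mul]
        _ ≤ c⁻¹ * ‖Lop v‖ := mul_le_mul_of_nonneg_left h hinv
        _ = (⟨c⁻¹, hinv⟩ : NNReal) * ‖Lop v‖ := rfl
    have hrange_closed :
        IsClosed ((LinearMap.range (Lop : Vs →ₗ[ℂ] Vs) : Submodule ℂ Vs) : Set Vs) := by
      have h := hanti.isClosed_range Lop.uniformContinuous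
      have heq : ((LinearMap.range (Lop : Vs →ₗ[ℂ] Vs) : Submodule ℂ Vs) : Set Vs)
          = Set.range Lop := by
        ext u
        simp only [SetLike.mem_coe, LinearMap.mem_range, Set.mem_range,
          ContinuousLinearMap.coe_coe]
      rwa [heq]
    haveI : CompleteSpace (LinearMap.range (Lop : Vs →ₗ[ℂ] Vs)) := hrange_closed.completeSpace_coe
    have hbot : (LinearMap.range (Lop : Vs →ₗ[ℂ] Vs))ᗮ = ⊥ := by
      rw [Submodule.eq_bot_iff]
      intro u hu
      have hmem : Lop u ∈ LinearMap.range (Lop : Vs →ₗ[ℂ] Vs) :=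
        LinearMap.mem_range.mpr ⟨u, rfl⟩
      have h0 : ⟪(Lop u : Vs), u⟫_ℂ = 0 := (Submodule.mem_orthogonal _ u).mp hu (Lop u) hmem
      have h0' : ⟪u, Lop u⟫_ℂ = 0 := by
        rw [← inner_conj_symm (𝕜 := ℂ) (E := Vs), h0, map_zero]
      have h2 := hcoer u
      rw [h0', Complex.zero_re] at h2
      have h5 : c * ‖u‖ ^ 2 ≤ c * 0 := by rwa [mul_zero]
      have h4 : ‖u‖ ^ 2 ≤ 0 := (mul_le_mul_iff_right₀ hcpos).mp h5
      have h6 : ‖u‖ ^ 2 = 0 := le_antisymm h4 (sq_nonneg _)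
      have h7 : ‖u‖ = 0 := by
        exact pow_eq_zero_iff (n := 2) (M₀ := ℝ) (by norm_num) |>.mp h6
      exact norm_eq_zero.mp h7
    have htop : LinearMap.range (Lop : Vs →ₗ[ℂ] Vs) = ⊤ :=
      Submodule.orthogonal_eq_bot_iff.mp hbot
    intro u
    have hmem : u ∈ LinearMap.range (Lop : Vs →ₗ[ℂ] Vs) := htop ▸ Submodule.mem_top
    obtain ⟨w, hw⟩ := LinearMap.mem_range.mp hmem
    exact ⟨w, hw⟩
  -- surjectivity of M z
  have hTsurj : ∀ u : H, ∃ xd : (M z).domain, (M z) xd = u := by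
    intro u
    obtain ⟨w, hw⟩ := hLsurj ((ContinuousLinearMap.adjoint pi1) u)
    have hkey : ∀ g : Vs, ⟪pi2 g, pi2 w⟫_ℂ + (l : ℂ) * ⟪pi1 g, rho w⟫_ℂ
        + (l : ℂ) ^ 2 * ⟪pi1 g, pi1 w⟫_ℂ = ⟪pi1 g, u⟫_ℂ := by
      intro g
      have h1 : ⟪g, Lop w⟫_ℂ = ⟪g, (ContinuousLinearMap.adjoint pi1) u⟫_ℂ := by rw [hw]
      rw [hLinner w g, ContinuousLinearMap.adjoint_inner_right] at h1
      exact h1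
    set x : H := pi1 w with hxdef
    set v : H := pi2 w with hvdef
    set r : H := rho w with hrdef
    set hh : H := u - (l : ℂ) • r - (l : ℂ) ^ 2 • x with hhdef
    have key2 : ∀ f : B.domain, ⟪(B f : H), v⟫_ℂ = ⟪(f : H), hh⟫_ℂ := by
      intro f
      obtain ⟨g, hg1, hg2⟩ := hemb f
      have h := hkey g
      rw [hg1, hg2] at h
      rw [hhdef, inner_sub_right, inner_sub_right, inner_smul_right, inner_smul_right]
      linear_combination h
    have key3 : ∀ f : B.domain, ⟪hh, (f : H)⟫_ℂ = ⟪v, B f⟫_ℂ := by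
      intro f
      have h := congrArg (starRingEnd ℂ) (key2 f)
      rw [inner_conj_symm, inner_conj_symm] at h
      exact h.symm
    have hvadj : v ∈ B.adjoint.domain := LinearPMap.mem_adjoint_domain_of_exists v ⟨hh, key3⟩
    have hvval : B.adjoint ⟨v, hvadj⟩ = hh := LinearPMap.adjoint_apply_eq hBdense ⟨v, hvadj⟩ key3
    have hvdom : v ∈ B.domain := hadj_dom ▸ hvadj
    have hBv : B ⟨v, hvdom⟩ = hh := (hadj_to_B v hvadj hvdom).trans hvval
    have hxB : x ∈ B.domain := hdom1 w
    have hBx : B ⟨x, hxB⟩ = v := hBpi w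
    have hBxdom : B ⟨x, hxB⟩ ∈ B.domain := by rw [hBx]; exact hvdom
    have hmem2 : (x, hh) ∈ B2.graph := by
      refine (hB2 x hh).mpr ⟨hxB, hBxdom, ?_⟩
      have heq : (⟨B ⟨x, hxB⟩, hBxdom⟩ : B.domain) = ⟨v, hvdom⟩ := Subtype.ext hBx
      rw [heq]; exact hBv
    have hxd2 : x ∈ B2.domain := LinearPMap.mem_domain_of_mem_graph hmem2
    have hB2x : B2 ⟨x, hxd2⟩ = hh :=
      (graph_determined B2 hmem2 (B2.mem_graph ⟨x, hxd2⟩)).symm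
    have hxdM : x ∈ (M z).domain := by rw [hMdom]; exact hxd2
    refine ⟨⟨x, hxdM⟩, ?_⟩
    have hval := hMval z ⟨x, hxdM⟩ hxd2 (hdomR w)
    have hRx : R ⟨x, hdomR w⟩ = r := rfl
    have hIz : Complex.I * z = -(l : ℂ) := by
      rw [hzdef, ← mul_assoc, Complex.I_mul_I, neg_one_mul]
    have hz2 : z ^ 2 = -((l : ℂ) ^ 2) := by
      rw [hzdef, mul_pow, Complex.I_sq, neg_one_mul]
    rw [hval]
    show B2 ⟨x, hxd2⟩ - (Complex.I * z) • R ⟨x, hdomR w⟩ - z ^ 2 • x = u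
    rw [hIz, hz2, hB2x, hRx, hhdef]
    simp only [neg_smul, sub_neg_eq_add]
    abel
  -- coercivity of M z
  have hTlow : ∀ xd : (M z).domain, l ^ 2 * ‖(xd : H)‖ ≤ ‖(M z) xd‖ := by
    intro xd
    have hx2 : (xd : H) ∈ B2.domain := (hMdom z).le xd.2
    obtain ⟨hx, hBx, hBBx⟩ :=
      (hB2 (xd : H) (B2 ⟨(xd : H), hx2⟩)).mp (B2.mem_graph ⟨(xd : H), hx2⟩)
    have hxR : (xd : H) ∈ R.domain := hRdom hx
    have hval := hMval z xd hx2 hxR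
    have hIz : Complex.I * z = -(l : ℂ) := by
      rw [hzdef, ← mul_assoc, Complex.I_mul_I, neg_one_mul]
    have hz2 : z ^ 2 = -((l : ℂ) ^ 2) := by
      rw [hzdef, mul_pow, Complex.I_sq, neg_one_mul]
    rw [hIz, hz2] at hval
    have hval2 : (M z) xd = B2 ⟨(xd : H), hx2⟩ + (l : ℂ) • R ⟨(xd : H), hxR⟩
        + (l : ℂ) ^ 2 • (xd : H) := by
      rw [hval]; simp only [neg_smul, sub_neg_eq_add]
    have hiB2 : ⟪(xd : H), B2 ⟨(xd : H), hx2⟩⟫_ℂ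
        = ⟪(B ⟨(xd : H), hx⟩ : H), (B ⟨(xd : H), hx⟩ : H)⟫_ℂ := by
      rw [← hBBx]
      exact (hsym ⟨(xd : H), hx⟩ ⟨B ⟨(xd : H), hx⟩, hBx⟩).symm
    have hinner : (⟪(xd : H), (M z) xd⟫_ℂ).re
        = ‖B ⟨(xd : H), hx⟩‖ ^ 2 + l * (⟪(xd : H), R ⟨(xd : H), hxR⟩⟫_ℂ).re
          + l ^ 2 * ‖(xd : H)‖ ^ 2 := by
      rw [hval2, inner_add_right, inner_add_right, inner_smul_right, inner_smul_right, hiB2]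
      have e1 : ((l : ℂ) * ⟪(xd : H), R ⟨(xd : H), hxR⟩⟫_ℂ).re
          = l * (⟪(xd : H), R ⟨(xd : H), hxR⟩⟫_ℂ).re := Complex.re_ofReal_mul _ _
      have e2 : ((l : ℂ) ^ 2 * ⟪(xd : H), (xd : H)⟫_ℂ).re
          = l ^ 2 * (⟪(xd : H), (xd : H)⟫_ℂ).re := by
        rw [← Complex.ofReal_pow]; exact Complex.re_ofReal_mul _ _
      rw [Complex.add_re, Complex.add_re, e1, e2, hnsq, hnsq]
    have hge : l ^ 2 * ‖(xd : H)‖ ^ 2 ≤ (⟪(xd : H), (M z) xd⟫_ℂ).re := by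
      rw [hinner]
      have h1 := haccretive ⟨(xd : H), hxR⟩
      nlinarith [sq_nonneg ‖B ⟨(xd : H), hx⟩‖, mul_nonneg hl.le h1]
    have hub : (⟪(xd : H), (M z) xd⟫_ℂ).re ≤ ‖(xd : H)‖ * ‖(M z) xd‖ := by
      calc (⟪(xd : H), (M z) xd⟫_ℂ).re ≤ ‖(⟪(xd : H), (M z) xd⟫_ℂ)‖ :=
            Complex.re_le_norm _
        _ = ‖(⟪(xd : H), (M z) xd⟫_ℂ)‖ := rfl
        _ ≤ ‖(xd : H)‖ * ‖(M z) xd‖ := norm_inner_le_norm (𝕜 := ℂ) _ _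
    have h2 := hge.trans hub
    rcases eq_or_lt_of_le (norm_nonneg (xd : H)) with h0 | h0
    · rw [← h0, mul_zero]; exact norm_nonneg _
    · have h3 : (l ^ 2 * ‖(xd : H)‖) * ‖(xd : H)‖ ≤ ‖(M z) xd‖ * ‖(xd : H)‖ := by
        calc (l ^ 2 * ‖(xd : H)‖) * ‖(xd : H)‖ = l ^ 2 * ‖(xd : H)‖ ^ 2 := by ring
          _ ≤ ‖(xd : H)‖ * ‖(M z) xd‖ := h2
          _ = ‖(M z) xd‖ * ‖(xd : H)‖ := by ring
      exact le_of_mul_le_mul_right h3 h0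
  -- conclusion
  have hl2 : (0 : ℝ) < l ^ 2 := pow_pos hl 2
  have hTinj : Function.Injective ((M z).toFun) := by
    intro a b hab
    have he : (M z) (a - b) = 0 := by
      show (M z).toFun (a - b) = 0
      rw [map_sub, hab, sub_self]
    have h1 := hTlow (a - b)
    rw [he, norm_zero] at h1
    have h2 : ‖((a - b : (M z).domain) : H)‖ = 0 := by
      nlinarith [norm_nonneg ((a - b : (M z).domain) : H)]
    have h4 : a - b = 0 := Subtype.ext (norm_eq_zero.mp h2)
    exact sub_eq_zero.mp h4
  have hTsurj' : Function.Surjective ((M z).toFun) := fun u => hTsurj u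
  set e := LinearEquiv.ofBijective ((M z).toFun) ⟨hTinj, hTsurj'⟩ with hedef
  set S0 : H →ₗ[ℂ] H := ((M z).domain.subtype).comp (e.symm.toLinearMap) with hS0def
  have hS0bound : ∀ u : H, ‖S0 u‖ ≤ (l ^ 2)⁻¹ * ‖u‖ := by
    intro u
    have h1 := hTlow (e.symm u)
    have h2 : (M z) (e.symm u) = u := e.apply_symm_apply u
    rw [h2] at h1
    have h3 : ‖S0 u‖ = ‖((e.symm u : (M z).domain) : H)‖ := rfl
    rw [h3]
    calc ‖((e.symm u : (M z).domain) : H)‖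
        = (l ^ 2)⁻¹ * (l ^ 2 * ‖((e.symm u : (M z).domain) : H)‖) := by
          rw [← mul_assoc, inv_mul_cancel₀ hl2.ne', one_mul]
      _ ≤ (l ^ 2)⁻¹ * ‖u‖ := mul_le_mul_of_nonneg_left h1 (inv_nonneg.mpr hl2.le)
  refine ⟨S0.mkContinuous ((l ^ 2)⁻¹) hS0bound, ?_, ?_⟩
  · intro w
    simp only [zero_smul, add_zero]
    have hSw : S0.mkContinuous ((l ^ 2)⁻¹) hS0bound w = ((e.symm w : (M z).domain) : H) := rfl
    have hTw : (M z) (e.symm w) = w := e.apply_symm_apply w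
    have hmem := (M z).mem_graph (e.symm w)
    rw [hTw] at hmem
    rw [hSw]
    exact hmem
  · intro x y hxy
    simp only [zero_smul, sub_zero]
    rw [LinearPMap.mem_graph_iff] at hxy
    obtain ⟨xd, hx1, hy1⟩ := hxy
    have hx1' : (xd : H) = x := hx1
    have hy1' : (M z) xd = y := hy1
    rw [← hy1', ← hx1']
    show ((e.symm ((M z) xd) : (M z).domain) : H) = (xd : H)
    have h := e.symm_apply_apply xd
    rw [show e.symm ((M z) xd) = xd from h]
end

section
/- Suppose there exist constants 0 ≤ a < 1 and b ≥ 0 such that ‖Rf‖ ≤ a‖Bf‖ + b‖f‖ for all f ∈ dom(B). Then there exists Λ > 0 such that for all λ ≥ Λ the operator M(iλ) = B² + λ R + λ² I, with domain dom(B²), has an everywhere defined bounded inverse on H. -/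
open scoped InnerProductSpace

set_option maxHeartbeats 1600000 in
/-- Remark 5.4 (iii). Let `B` be a self-adjoint nonnegative operator in `H`
with `ker(B) = {0}` and `R` densely defined closable with `dom(R) ⊇ dom(B)`.  Suppose there
are constants `0 ≤ a < 1` and `b ≥ 0` with `‖Rf‖ ≤ a‖Bf‖ + b‖f‖` for all `f ∈ dom(B)`.
Then there exists `Λ > 0` such that for all `λ ≥ Λ` the operator `M(iλ) = B² + λR + λ²I`,
with domain `dom(B²)`, has an everywhere defined bounded inverse on `H`. -/
theorem pencil_invertible_for_large_lambda_of_relative_bound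
    {H : Type*}
    [NormedAddCommGroup H] [InnerProductSpace ℂ H] [CompleteSpace H]
    [TopologicalSpace.SeparableSpace H]
    (B : H →ₗ.[ℂ] H)
    (hBdense : Dense (B.domain : Set H))
    (hBsa : B.adjoint = B)
    (hBker : ∀ f : B.domain, B f = 0 → (f : H) = 0)
    (hBnonneg : ∀ f : B.domain, 0 ≤ (⟪(f : H), B f⟫_ℂ).re)
    (R : H →ₗ.[ℂ] H)
    (hRdense : Dense (R.domain : Set H))
    (hRclosable : R.IsClosable)
    (hRdom : B.domain ≤ R.domain)
    -- `B² = B ∘ B` with its natural domain: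
    (B2 : H →ₗ.[ℂ] H)
    (hB2 : ∀ (x y : H), (x, y) ∈ B2.graph ↔
      ∃ (hx : x ∈ B.domain) (hBx : B ⟨x, hx⟩ ∈ B.domain), B ⟨B ⟨x, hx⟩, hBx⟩ = y)
    -- the pencil `M(z) = B² − i z R − z² I` (so `M(iλ) = B² + λR + λ²I`) on `dom(B²)`:
    (M : ℂ → (H →ₗ.[ℂ] H))
    (hMdom : ∀ z : ℂ, (M z).domain = B2.domain)
    (hMval : ∀ (z : ℂ) (x : (M z).domain) (hx2 : (x : H) ∈ B2.domain)
      (hxR : (x : H) ∈ R.domain),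
      M z x = B2 ⟨(x : H), hx2⟩ - (Complex.I * z) • R ⟨(x : H), hxR⟩ - z ^ 2 • (x : H))
    -- `R` is `B`-bounded with relative bound `a < 1`:
    (a b : ℝ) (ha0 : 0 ≤ a) (ha1 : a < 1) (hb : 0 ≤ b)
    (hbound : ∀ (f : H) (hf : f ∈ B.domain),
      ‖R ⟨f, hRdom hf⟩‖ ≤ a * ‖B ⟨f, hf⟩‖ + b * ‖f‖) :
    ∃ Λ : ℝ, 0 < Λ ∧ ∀ l : ℝ, Λ ≤ l →
      HasBoundedInverseShifted (M (Complex.I * (l : ℂ))) 0 := by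
  classical
  -- ## Part 1: consequences of self-adjointness
  have hsym : ∀ v w : B.domain, ⟪B v, (w : H)⟫_ℂ = ⟪(v : H), B w⟫_ℂ := by
    intro v w
    have hg : ((v : H), B v) ∈ B.adjoint.graph := by rw [hBsa]; exact B.mem_graph v
    rcases B.adjoint.mem_graph_iff.mp hg with ⟨v', hv1, hv2⟩
    dsimp only at hv1 hv2
    rw [← hv2, ← hv1]
    exact LinearPMap.adjoint_isFormalAdjoint hBdense v' w
  have hmax : ∀ x y : H, (∀ v : B.domain, ⟪x, B v⟫_ℂ = ⟪y, (v : H)⟫_ℂ) →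
      ∃ hx : x ∈ B.domain, B ⟨x, hx⟩ = y := by
    intro x y hxy
    have hx' : x ∈ B.adjoint.domain :=
      LinearPMap.mem_adjoint_domain_of_exists _ ⟨y, fun v => (hxy v).symm⟩
    have hval : B.adjoint ⟨x, hx'⟩ = y :=
      LinearPMap.adjoint_apply_eq hBdense _ (fun v => (hxy v).symm)
    have hg : (x, y) ∈ B.graph := by
      rw [← hBsa]
      exact B.adjoint.mem_graph_iff.mpr ⟨⟨x, hx'⟩, rfl, hval⟩
    rcases B.mem_graph_iff.mp hg with ⟨⟨v, hv⟩, hv1, hv2⟩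
    dsimp only at hv1
    subst hv1
    exact ⟨hv, hv2⟩
  have hclosed : IsClosed (B.graph : Set (H × H)) := by
    have heq : (B.graph : Set (H × H)) =
        ⋂ v : B.domain, {p : H × H | ⟪p.1, B v⟫_ℂ = ⟪p.2, (v : H)⟫_ℂ} := by
      ext p
      simp only [Set.mem_iInter, Set.mem_setOf_eq, SetLike.mem_coe]
      constructor
      · intro hp v
        rcases B.mem_graph_iff.mp hp with ⟨w, hw1, hw2⟩
        rw [← hw1, ← hw2]
        exact (hsym w v).symm
      · intro hp
        obtain ⟨hx, hval⟩ := hmax p.1 p.2 hp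
        exact B.mem_graph_iff.mpr ⟨⟨p.1, hx⟩, rfl, hval⟩
    rw [heq]
    exact isClosed_iInter fun v =>
      isClosed_eq (Continuous.inner continuous_fst continuous_const)
        (Continuous.inner continuous_snd continuous_const)
  -- ## the threshold
  refine ⟨max 1 (2*b/(1-a)), lt_of_lt_of_le one_pos (le_max_left _ _), ?_⟩
  intro l hl
  have hl1 : (1:ℝ) ≤ l := le_trans (le_max_left _ _) hl
  have hlpos : (0:ℝ) < l := lt_of_lt_of_le one_pos hl1
  have hlC : (l:ℂ) ≠ 0 := by exact_mod_cast ne_of_gt hlpos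
  have hble : 2*b ≤ l*(1-a) := by
    have h1 : 2*b/(1-a) ≤ l := le_trans (le_max_right _ _) hl
    have h2 : (0:ℝ) < 1 - a := by linarith
    calc 2*b = (2*b/(1-a)) * (1-a) := by field_simp
    _ ≤ l * (1-a) := mul_le_mul_of_nonneg_right h1 (le_of_lt h2)
  -- ## Part 2: surjectivity of `B² + l²`
  have hsurj : ∀ h0 : H, ∃ x : B2.domain, B2 x + (l:ℂ)^2 • (x:H) = h0 := by
    intro h0
    let P := WithLp 2 (H × H)
    let eH : P ≃ₗ[ℂ] H × H := WithLp.linearEquiv 2 ℂ (H × H)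
    let K : Submodule ℂ P := B.graph.comap
      ((LinearMap.prodMap (((l:ℂ)⁻¹) • LinearMap.id) LinearMap.id).comp eH.toLinearMap)
    have hKmem : ∀ p : P, p ∈ K ↔ ((l:ℂ)⁻¹ • (eH p).1, (eH p).2) ∈ B.graph := fun p => Iff.rfl
    have hKclosed : IsClosed (K : Set P) := by
      have hcont : Continuous (fun p : P => (((l:ℂ)⁻¹ • (eH p).1, (eH p).2) : H × H)) := by
        have h1 : Continuous (fun p : P => (eH p : H × H)) := WithLp.prod_continuous_ofLp 2 H H
        exact (h1.fst.const_smul _).prodMk h1.snd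
      exact hclosed.preimage hcont
    haveI : CompleteSpace K := hKclosed.completeSpace_coe
    set w0 : P := eH.symm ((l:ℂ)⁻¹ • h0, 0) with hw0
    set pv : P := ↑(K.orthogonalProjectionOnto w0) with hpv
    have hpK : pv ∈ K := Submodule.coe_mem _
    have hqK : w0 - pv ∈ Kᗮ := Submodule.sub_starProjection_mem_orthogonal (K := K) w0
    set q1 : H := (eH (w0 - pv)).1 with hq1
    set q2 : H := (eH (w0 - pv)).2 with hq2
    rcases B.mem_graph_iff.mp ((hKmem pv).mp hpK) with ⟨xv, hxv1, hxv2⟩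
    dsimp only at hxv1 hxv2
    have horth : ∀ w : B.domain, ⟪q2, B w⟫_ℂ = ⟪-((l:ℂ) • q1), (w : H)⟫_ℂ := by
      intro w
      have hmemK : eH.symm ((l:ℂ) • (w : H), B w) ∈ K := by
        rw [hKmem]
        simp only [LinearEquiv.apply_symm_apply]
        rw [smul_smul, inv_mul_cancel₀ hlC, one_smul]
        exact B.mem_graph w
      have h0' := (Submodule.mem_orthogonal K (w0 - pv)).mp hqK _ hmemK
      rw [WithLp.prod_inner_apply] at h0'
      have h0'' : ⟪(l:ℂ) • (w : H), q1⟫_ℂ + ⟪(B w : H), q2⟫_ℂ = 0 := h0'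
      have h1 : ⟪(B w : H), q2⟫_ℂ = -((l:ℂ) * ⟪(w : H), q1⟫_ℂ) := by
        rw [inner_smul_left] at h0''
        have hc : (starRingEnd ℂ) (l:ℂ) = (l:ℂ) := Complex.conj_ofReal l
        rw [hc] at h0''
        linear_combination h0''
      rw [← inner_conj_symm, h1]
      rw [inner_neg_left, inner_smul_left, Complex.conj_ofReal, map_neg, map_mul,
        Complex.conj_ofReal, inner_conj_symm]
    obtain ⟨hq2dom, hq2val⟩ := hmax q2 (-((l:ℂ) • q1)) horth
    have hq1' : q1 = (l:ℂ)⁻¹ • h0 - (eH pv).1 := by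
      rw [hq1, map_sub]; simp [hw0]
    have hq2' : q2 = -(eH pv).2 := by
      rw [hq2, map_sub]; simp [hw0]
    have hBxv : (B xv : H) ∈ B.domain := by
      rw [hxv2]
      have hmem := hq2dom
      rw [hq2'] at hmem
      exact (neg_mem_iff).mp hmem
    have hq2sub : (⟨q2, hq2dom⟩ : B.domain) = -⟨(B xv : H), hBxv⟩ := by
      apply Subtype.ext
      simp [hq2', hxv2]
    have hBBxv : B ⟨(B xv : H), hBxv⟩ = (l:ℂ) • q1 := by
      have hv := hq2val
      rw [hq2sub, LinearPMap.map_neg] at hv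
      have h2 := neg_eq_iff_eq_neg.mp hv
      rw [h2]; simp
    have hg2 : ((xv : H), (l:ℂ) • q1) ∈ B2.graph := (hB2 _ _).mpr ⟨xv.2, hBxv, hBBxv⟩
    rcases B2.mem_graph_iff.mp hg2 with ⟨x2, hx21, hx22⟩
    dsimp only at hx21 hx22
    refine ⟨x2, ?_⟩
    rw [hx22, hx21, hxv1, hq1']
    have hll : (l:ℂ)^2 * (l:ℂ)⁻¹ = (l:ℂ) := by field_simp
    rw [smul_sub, smul_smul, mul_inv_cancel₀ hlC, one_smul, smul_smul, hll]
    abel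
  -- ## Part 3: quantitative estimates
  have hest : ∀ x : B2.domain, (l^2 * ‖(x:H)‖ ≤ ‖B2 x + (l:ℂ)^2 • (x:H)‖ ∧
      ∀ hx : (x:H) ∈ B.domain, l * ‖B ⟨(x:H), hx⟩‖ ≤ ‖B2 x + (l:ℂ)^2 • (x:H)‖) := by
    intro x
    obtain ⟨hx, hBx, hval⟩ := (hB2 (x:H) (B2 x)).mp (B2.mem_graph x)
    set v : B.domain := ⟨(x:H), hx⟩ with hv
    have hinner : (⟪(x:H), B2 x⟫_ℂ).re = ‖B v‖^2 := by
      rw [← hval]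
      have h1 := hsym v ⟨B v, hBx⟩
      dsimp only at h1
      rw [← h1]
      exact inner_self_eq_norm_sq (𝕜 := ℂ) _
    have hre : (⟪B2 x, ((l:ℂ)^2) • (x:H)⟫_ℂ).re = l^2 * ‖B v‖^2 := by
      rw [inner_smul_right, ← inner_conj_symm]
      have h2 : ((l:ℂ)^2) = (((l^2 : ℝ)) : ℂ) := by push_cast; ring
      rw [h2]
      rw [Complex.re_ofReal_mul, Complex.conj_re, hinner]
    have hnorm2 : ‖(l:ℂ)^2 • (x:H)‖ = l^2 * ‖(x:H)‖ := by
      rw [norm_smul, norm_pow, Complex.norm_real, Real.norm_eq_abs, abs_of_pos hlpos]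
    have hsq : ‖B2 x + (l:ℂ)^2 • (x:H)‖^2
        = ‖B2 x‖^2 + 2*(l^2*‖B v‖^2) + (l^2*‖(x:H)‖)^2 := by
      rw [norm_add_sq (𝕜 := ℂ), hnorm2,
        show RCLike.re ⟪(B2 x : H), (l:ℂ)^2 • (x:H)⟫_ℂ
          = (⟪(B2 x : H), (l:ℂ)^2 • (x:H)⟫_ℂ).re from rfl, hre]
    constructor
    · apply (pow_le_pow_iff_left₀ (by positivity) (norm_nonneg _) two_ne_zero).mp
      nlinarith [sq_nonneg ‖B2 x‖, sq_nonneg ‖B v‖, hsq]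
    · intro hx'
      have hvv : (⟨(x:H), hx'⟩ : B.domain) = v := rfl
      rw [hvv]
      apply (pow_le_pow_iff_left₀ (by positivity) (norm_nonneg _) two_ne_zero).mp
      nlinarith [sq_nonneg ‖B2 x‖, sq_nonneg (l^2*‖(x:H)‖), sq_nonneg ‖B v‖, hsq,
        sq_nonneg (l*‖B v‖), hlpos, sq_nonneg l]
  -- ## Part 4: the solution operator `G` of `B² + l²`
  have hdomB : ∀ x : B2.domain, (x:H) ∈ B.domain :=
    fun x => ((hB2 (x:H) (B2 x)).mp (B2.mem_graph x)).choose
  have huniq' : ∀ x y : B2.domain, B2 x + (l:ℂ)^2 • (x:H) = B2 y + (l:ℂ)^2 • (y:H) → x = y := by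
    intro x y hxy
    have h1 : B2 (x - y) + (l:ℂ)^2 • ((x - y : B2.domain) : H) = 0 := by
      rw [LinearPMap.map_sub, Submodule.coe_sub, smul_sub]
      rw [sub_add_sub_comm, hxy, sub_self]
    have h2 := (hest (x - y)).1
    rw [h1, norm_zero] at h2
    have h3 : ‖((x - y : B2.domain) : H)‖ = 0 := by
      by_contra hne
      have hpos : 0 < ‖((x - y : B2.domain) : H)‖ :=
        lt_of_le_of_ne (norm_nonneg _) (Ne.symm hne)
      have := mul_pos (pow_pos hlpos 2) hpos
      linarith
    have h4 : ((x - y : B2.domain) : H) = 0 := norm_eq_zero.mp h3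
    have h5 : x - y = 0 := Subtype.ext h4
    exact sub_eq_zero.mp h5
  -- ## Part 5: the solution operator and the inverse
  set sol : H → B2.domain := fun u => (hsurj u).choose with hsoldef
  have hsol : ∀ u, B2 (sol u) + (l:ℂ)^2 • ((sol u : B2.domain) : H) = u :=
    fun u => (hsurj u).choose_spec
  have hsolu : ∀ (u : H) (x : B2.domain), B2 x + (l:ℂ)^2 • (x:H) = u → sol u = x :=
    fun u x hx => huniq' _ _ (by rw [hsol u, hx])
  have sol_add : ∀ u v, sol (u + v) = sol u + sol v := by
    intro u v
    refine hsolu _ _ ?_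
    rw [LinearPMap.map_add, Submodule.coe_add, smul_add]
    have h1 := hsol u; have h2 := hsol v
    calc B2 (sol u) + B2 (sol v) + ((l:ℂ)^2 • (↑(sol u):H) + (l:ℂ)^2 • (↑(sol v):H))
        = (B2 (sol u) + (l:ℂ)^2 • (↑(sol u):H)) + (B2 (sol v) + (l:ℂ)^2 • (↑(sol v):H)) := by
          abel
      _ = u + v := by rw [h1, h2]
  have sol_smul : ∀ (c : ℂ) u, sol (c • u) = c • sol u := by
    intro c u
    refine hsolu _ _ ?_
    rw [LinearPMap.map_smul, Submodule.coe_smul, smul_comm ((l:ℂ)^2) c]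
    rw [← smul_add, hsol u]
  have hgnorm : ∀ u : H, l^2 * ‖((sol u : B2.domain) : H)‖ ≤ ‖u‖ := by
    intro u; have := (hest (sol u)).1; rwa [hsol u] at this
  have hBnorm' : ∀ u : H, l * ‖B ⟨((sol u : B2.domain) : H), hdomB _⟩‖ ≤ ‖u‖ := by
    intro u; have := (hest (sol u)).2 (hdomB _); rwa [hsol u] at this
  have memR : ∀ x : B2.domain, (x:H) ∈ R.domain := fun x => hRdom (hdomB x)
  have Rsol_add : ∀ u v, R ⟨↑(sol (u+v)), memR _⟩
      = R ⟨↑(sol u), memR _⟩ + R ⟨↑(sol v), memR _⟩ := by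
    intro u v
    have h1 : (⟨↑(sol (u+v)), memR _⟩ : R.domain)
        = ⟨↑(sol u), memR _⟩ + ⟨↑(sol v), memR _⟩ := by
      apply Subtype.ext; rw [sol_add]; rfl
    rw [h1, LinearPMap.map_add]
  have Rsol_smul : ∀ (c : ℂ) u, R ⟨↑(sol (c • u)), memR _⟩ = c • R ⟨↑(sol u), memR _⟩ := by
    intro c u
    have h1 : (⟨↑(sol (c•u)), memR _⟩ : R.domain) = c • ⟨↑(sol u), memR _⟩ := by
      apply Subtype.ext; rw [sol_smul]; rfl
    rw [h1, LinearPMap.map_smul]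
  let gL : H →ₗ[ℂ] H :=
    { toFun := fun u => ((sol u : B2.domain) : H)
      map_add' := fun u v => by
        show ((sol (u+v) : B2.domain) : H) = ↑(sol u) + ↑(sol v)
        rw [sol_add]; rfl
      map_smul' := fun c u => by
        show ((sol (c • u) : B2.domain) : H) = c • (((sol u : B2.domain)) : H)
        rw [sol_smul]; rfl }
  let kL : H →ₗ[ℂ] H :=
    { toFun := fun u => (l:ℂ) • (R ⟨↑(sol u), memR _⟩ : H)
      map_add' := fun u v => by
        show (l:ℂ) • (R ⟨↑(sol (u+v)), memR _⟩ : H)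
          = (l:ℂ) • (R ⟨↑(sol u), memR _⟩ : H) + (l:ℂ) • (R ⟨↑(sol v), memR _⟩ : H)
        rw [Rsol_add, smul_add]
      map_smul' := fun c u => by
        show (l:ℂ) • (R ⟨↑(sol (c • u)), memR _⟩ : H)
          = c • ((l:ℂ) • (R ⟨↑(sol u), memR _⟩ : H))
        rw [Rsol_smul, smul_comm] }
  have hgL : ∀ u, ‖gL u‖ ≤ 1 * ‖u‖ := by
    intro u
    have h1 := hgnorm u
    have hll2 : (1:ℝ) ≤ l^2 := by nlinarith
    have h2 : ‖((sol u : B2.domain):H)‖ ≤ l^2 * ‖((sol u : B2.domain):H)‖ := by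
      nlinarith [norm_nonneg ((sol u : B2.domain):H)]
    show ‖((sol u : B2.domain):H)‖ ≤ 1 * ‖u‖
    rw [one_mul]
    exact le_trans h2 h1
  have θnn : (0:ℝ) ≤ (1+a)/2 := by linarith
  have hkL : ∀ u, ‖kL u‖ ≤ (1+a)/2 * ‖u‖ := by
    intro u
    have h1 := hbound ↑(sol u) (hdomB _)
    have h2 : ‖kL u‖ = l * ‖(R ⟨↑(sol u), memR _⟩ : H)‖ := by
      show ‖(l:ℂ) • (R ⟨↑(sol u), memR _⟩ : H)‖ = _
      rw [norm_smul, Complex.norm_real, Real.norm_eq_abs, abs_of_pos hlpos]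
    rw [h2]
    have hBn := hBnorm' u; have hgn := hgnorm u
    have key : (l * ‖(R ⟨↑(sol u), memR _⟩ : H)‖) * l ≤ ((1+a)/2 * ‖u‖) * l := by
      nlinarith [mul_le_mul_of_nonneg_left h1 (by positivity : (0:ℝ) ≤ l*l),
        mul_le_mul_of_nonneg_left hBn (mul_nonneg ha0 hlpos.le),
        mul_le_mul_of_nonneg_left hgn hb,
        mul_le_mul_of_nonneg_right hble (norm_nonneg u)]
    exact le_of_mul_le_mul_right key hlpos
  let Gc : H →L[ℂ] H := gL.mkContinuous 1 hgL
  let Kc : H →L[ℂ] H := kL.mkContinuous ((1+a)/2) hkL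
  have hKcnorm : ‖Kc‖ ≤ (1+a)/2 := kL.mkContinuous_norm_le θnn hkL
  have hKlt : ‖-Kc‖ < 1 := by rw [norm_neg]; linarith
  let u1 : (H →L[ℂ] H)ˣ := Units.oneSub (-Kc) hKlt
  have hu1val : ∀ w : H, (u1 : H →L[ℂ] H) w = w + Kc w := by
    intro w
    show ((1 - -Kc : H →L[ℂ] H)) w = _
    rw [ContinuousLinearMap.sub_apply, ContinuousLinearMap.neg_apply, sub_neg_eq_add]
    rfl
  set z : ℂ := Complex.I * (l:ℂ) with hz
  have memM : ∀ x : H, x ∈ B2.domain → x ∈ (M z).domain := fun x hx => (hMdom z).symm ▸ hx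
  have hMzval : ∀ (x : (M z).domain) (hx2 : (x:H) ∈ B2.domain) (hxR : (x:H) ∈ R.domain),
      M z x = B2 ⟨(x:H), hx2⟩ + (l:ℂ) • (R ⟨(x:H), hxR⟩ : H) + (l:ℂ)^2 • (x:H) := by
    intro x hx2 hxR
    rw [hMval z x hx2 hxR]
    have h1 : Complex.I * z = -(l:ℂ) := by rw [hz, ← mul_assoc, Complex.I_mul_I]; ring
    have h2 : z^2 = -((l:ℂ)^2) := by rw [hz, mul_pow, Complex.I_sq]; ring
    rw [h1, h2, neg_smul, neg_smul, sub_neg_eq_add, sub_neg_eq_add]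
  have hMapp : ∀ u : H, M z ⟨↑(sol u), memM _ (sol u).2⟩ = u + kL u := by
    intro u
    rw [hMzval ⟨↑(sol u), memM _ (sol u).2⟩ (sol u).2 (memR (sol u))]
    have he : (⟨((sol u : B2.domain) : H), (sol u).2⟩ : B2.domain) = sol u := rfl
    calc B2 ⟨((sol u : B2.domain) : H), (sol u).2⟩ + (l:ℂ) • (R ⟨↑(sol u), memR _⟩ : H)
          + (l:ℂ)^2 • ((sol u : B2.domain) : H)
        = (B2 (sol u) + (l:ℂ)^2 • ((sol u : B2.domain) : H))
          + (l:ℂ) • (R ⟨↑(sol u), memR _⟩ : H) := by rw [he]; abel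
      _ = u + kL u := by rw [hsol u]; rfl
  refine ⟨Gc.comp (↑u1⁻¹ : H →L[ℂ] H), ?_, ?_⟩
  · intro w
    simp only [zero_smul, add_zero]
    set u : H := ((↑u1⁻¹ : H →L[ℂ] H) w) with hu
    have hS : (Gc.comp (↑u1⁻¹ : H →L[ℂ] H)) w = ((sol u : B2.domain) : H) := rfl
    rw [hS]
    refine (M z).mem_graph_iff.mpr ⟨⟨↑(sol u), memM _ (sol u).2⟩, rfl, ?_⟩
    rw [hMapp u]
    have h2 : (u1 : H →L[ℂ] H) u = w := by
      rw [hu, ← ContinuousLinearMap.mul_apply, u1.mul_inv]; rfl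
    rw [← h2, hu1val u]
    rfl
  · intro x y hxy
    simp only [zero_smul, sub_zero]
    rcases (M z).mem_graph_iff.mp hxy with ⟨x', hx1, hx2⟩
    dsimp only at hx1 hx2
    subst hx1
    have hxB2 : ((x' : H)) ∈ B2.domain := (hMdom z) ▸ x'.2
    set v : H := B2 ⟨↑x', hxB2⟩ + (l:ℂ)^2 • ((x' : H)) with hv
    have hsolv : sol v = ⟨↑x', hxB2⟩ := hsolu v ⟨↑x', hxB2⟩ rfl
    have hkLv : kL v = (l:ℂ) • (R ⟨↑x', memR ⟨↑x', hxB2⟩⟩ : H) := by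
      show (l:ℂ) • (R ⟨↑(sol v), memR _⟩ : H) = _
      have hsub : (⟨↑(sol v), memR _⟩ : R.domain) = ⟨↑x', memR ⟨↑x', hxB2⟩⟩ :=
        Subtype.ext (by rw [hsolv])
      rw [hsub]
    have hyv : y = v + kL v := by
      rw [← hx2, hMzval x' hxB2 (memR ⟨↑x', hxB2⟩), hkLv, hv]
      abel
    have h2 : (u1 : H →L[ℂ] H) v = y := by rw [hu1val v, hyv]; rfl
    have h3 : ((↑u1⁻¹ : H →L[ℂ] H)) y = v := by
      rw [← h2, ← ContinuousLinearMap.mul_apply, u1.inv_mul]; rfl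
    show Gc ((↑u1⁻¹ : H →L[ℂ] H) y) = ↑x'
    rw [h3]
    show ((sol v : B2.domain) : H) = (↑x' : H)
    rw [hsolv]
end

section
/- Let S : H ⊇ dom(S) → H' be a closable, injective linear operator whose inverse S^{-1} is bounded with closure(S^{-1}) ∈ B(H', H), and let T : H' ⊇ dom(T) → H'' be a linear operator such that the restriction of T to dom(T) ∩ ran(S) is closable and the restriction of T to dom(T) ∩ ran(closure(S)) is contained in the closure of the restriction of T to dom(T) ∩ ran(S). Assume further that TS is closable. Then T ∘ closure(S) ⊆ closure(TS), i.e., for every f ∈ dom(closure(S)) with closure(S)f ∈ dom(T), the pair (f, T(closure(S)f)) lies in the closure of the graph of TS. -/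
open scoped InnerProductSpace

/-- Lemma B.2 (ii). Let `S : H ⊇ dom(S) → H'` be closable and injective
with bounded inverse whose closure lies in `B(H', H)`, and let `T : H' ⊇ dom(T) → H''` be
such that `T` restricted to `dom(T) ∩ ran(S)` is closable and `T` restricted to
`dom(T) ∩ ran(closure(S))` is contained in the closure of the restriction of `T` to
`dom(T) ∩ ran(S)`.  Assume `TS` is closable.  Then `T ∘ closure(S) ⊆ closure(TS)`: for every
`f ∈ dom(closure(S))` with `closure(S) f ∈ dom(T)`, the pair `(f, T(closure(S) f))` lies in
the graph of `closure(TS)`. -/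
theorem T_closureS_le_closure_TS
    {H H' H'' : Type*}
    [NormedAddCommGroup H] [InnerProductSpace ℂ H] [CompleteSpace H]
    [TopologicalSpace.SeparableSpace H]
    [NormedAddCommGroup H'] [InnerProductSpace ℂ H'] [CompleteSpace H']
    [TopologicalSpace.SeparableSpace H']
    [NormedAddCommGroup H''] [InnerProductSpace ℂ H''] [CompleteSpace H'']
    [TopologicalSpace.SeparableSpace H'']
    (S : H →ₗ.[ℂ] H') (T : H' →ₗ.[ℂ] H'')
    -- `S` is closable and injective, and `closure(S⁻¹) ∈ B(H', H)`:
    (hSclosable : S.IsClosable)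
    (hSinj : ∀ x : S.domain, S x = 0 → (x : H) = 0)
    (hSinv : ∃ G : H' →L[ℂ] H, ∀ x : S.domain, G (S x) = (x : H))
    -- `T|_{dom(T) ∩ ran(S)}` is closable:
    (hTresClosable : (T.domRestrict (LinearMap.range S.toFun)).IsClosable)
    -- `T|_{dom(T) ∩ ran(closure(S))} ⊆ closure(T|_{dom(T) ∩ ran(S)})`:
    (hTres : T.domRestrict (LinearMap.range S.closure.toFun) ≤
      (T.domRestrict (LinearMap.range S.toFun)).closure)
    -- `TS` (with its natural domain), assumed closable:
    (TS : H →ₗ.[ℂ] H'')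
    (hTS : ∀ (x : H) (z : H''), (x, z) ∈ TS.graph ↔
      ∃ (hx : x ∈ S.domain) (h2 : S ⟨x, hx⟩ ∈ T.domain), T ⟨S ⟨x, hx⟩, h2⟩ = z)
    (hTSclosable : TS.IsClosable) :
    ∀ (f : S.closure.domain) (hT : S.closure f ∈ T.domain),
      ((f : H), T ⟨S.closure f, hT⟩) ∈ TS.closure.graph := by
  obtain ⟨G, hG⟩ := hSinv
  intro f hT
  -- Step 1: `G (S.closure g) = g` for all `g` in the domain of the closure.
  have hGc : ∀ g : S.closure.domain, G (S.closure g) = (g : H) := by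
    intro g
    have hmem : ((g : H), S.closure g) ∈ S.closure.graph := S.closure.mem_graph g
    rw [← hSclosable.graph_closure_eq_closure_graph] at hmem
    have hclosed : IsClosed {p : H × H' | G p.2 = p.1} :=
      isClosed_eq (G.continuous.comp continuous_snd) continuous_fst
    have hsub : (S.graph : Set (H × H')) ⊆ {p : H × H' | G p.2 = p.1} := by
      rintro ⟨x, y⟩ hxy
      rw [SetLike.mem_coe, LinearPMap.mem_graph_iff] at hxy
      obtain ⟨a, ha1, ha2⟩ := hxy
      simp only [Set.mem_setOf_eq] at *
      rw [← ha2, hG a, ha1]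
    have hmem' : ((g : H), S.closure g) ∈ closure (S.graph : Set (H × H')) := hmem
    exact closure_minimal hsub hclosed hmem'
  set Tr := T.domRestrict (LinearMap.range S.toFun) with hTr
  -- Step 2: `(S.closure f, T (S.closure f))` lies in the closure of the graph of `Tr`.
  have hy : S.closure f ∈ LinearMap.range S.closure.toFun := ⟨f, rfl⟩
  have hdom : S.closure f ∈ (T.domRestrict (LinearMap.range S.closure.toFun)).domain :=
    Submodule.mem_inf.mpr ⟨hy, hT⟩
  have h1 : (S.closure f, T ⟨S.closure f, hT⟩) ∈ Tr.closure.graph := by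
    apply LinearPMap.le_graph_of_le hTres
    rw [LinearPMap.mem_graph_iff]
    exact ⟨⟨_, hdom⟩, rfl, LinearPMap.domRestrict_apply rfl⟩
  rw [← hTresClosable.graph_closure_eq_closure_graph] at h1
  have h1' : (S.closure f, T ⟨S.closure f, hT⟩) ∈ closure (Tr.graph : Set (H' × H'')) := h1
  -- Step 3: the continuous map `(y, z) ↦ (G y, z)` sends `Tr.graph` into `TS.graph`.
  have hmaps : Set.MapsTo (fun p : H' × H'' => (G p.1, p.2))
      (Tr.graph : Set (H' × H'')) (TS.graph : Set (H × H'')) := by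
    rintro ⟨y, z⟩ hyz
    rw [SetLike.mem_coe, LinearPMap.mem_graph_iff] at hyz
    obtain ⟨x, hx1', hx2'⟩ := hyz
    have hx1 : (x : H') = y := hx1'
    have hx2 : Tr x = z := hx2'
    obtain ⟨hxr, hxT⟩ := Submodule.mem_inf.mp x.2
    obtain ⟨a, ha⟩ := hxr
    have hSa : S a = y := by rw [← hx1]; exact ha
    have hGy : G y = (a : H) := by rw [← hSa]; exact hG a
    have hxTy : y ∈ T.domain := hx1 ▸ hxT
    have key : ((a : H), z) ∈ TS.graph := by
      rw [hTS]
      have h2 : S ⟨(a : H), a.2⟩ ∈ T.domain := by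
        have : S ⟨(a : H), a.2⟩ = y := by rw [← hSa]
        rw [this]; exact hxTy
      refine ⟨a.2, h2, ?_⟩
      have hTeq : T ⟨S ⟨(a : H), a.2⟩, h2⟩ = T ⟨y, hxTy⟩ := by
        congr 1
        exact Subtype.ext hSa
      rw [hTeq, ← hx2]
      exact (LinearPMap.domRestrict_apply hx1).symm
    simpa [hGy] using key
  -- Step 4: conclude by continuity.
  have hcont : Continuous (fun p : H' × H'' => (G p.1, p.2)) :=
    (G.continuous.comp continuous_fst).prodMk continuous_snd
  have hres := map_mem_closure hcont h1' hmaps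
  simp only [hGc f] at hres
  rw [← hTSclosable.graph_closure_eq_closure_graph]
  exact hres
end
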